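/- arXiv:2009.10909 — 10 statements merged into one kernel-verified Lean document; each statement's English description precedes it below -/
import Mathlib

section
/- Let Θ = (θ_0, θ_1) ∈ ℝ² and let V = (V_0, V_1) be a nonzero finite-dimensional Θ-stable representation of the quiver with relations (Q,I). Then at least one of the following holds: (1) dim V_0 = dim V_1 = 1; (2) a_1 = a_2 = 0; (3) b_1 = b_2 = 0. (Trichotomy lemma for stable representations of the CY4 quiver of the local resolved conifold O_{P1}(−1,−1,0).) -/
open Module

variable {V₀ V₁ : Type*} [AddCommGroup V₀] [Module ℂ V₀] [AddCommGroup V₁] [Module ℂ V₁]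

/-- `(W₀, W₁)` is a subrepresentation of the representation of the quiver `(Q, I)`
given by the data `(a₁, a₂, b₁, b₂, c, d)`. -/
def IsSubrep (a₁ a₂ : V₀ →ₗ[ℂ] V₁) (b₁ b₂ : V₁ →ₗ[ℂ] V₀)
    (c : V₀ →ₗ[ℂ] V₀) (d : V₁ →ₗ[ℂ] V₁)
    (W₀ : Submodule ℂ V₀) (W₁ : Submodule ℂ V₁) : Prop :=
  (∀ x ∈ W₀, a₁ x ∈ W₁) ∧ (∀ x ∈ W₀, a₂ x ∈ W₁) ∧
    (∀ y ∈ W₁, b₁ y ∈ W₀) ∧ (∀ y ∈ W₁, b₂ y ∈ W₀) ∧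
    (∀ x ∈ W₀, c x ∈ W₀) ∧ (∀ y ∈ W₁, d y ∈ W₁)

/-- The relations `a₂ bᵢ a₁ = a₁ bᵢ a₂`, `b₂ aᵢ b₁ = b₁ aᵢ b₂`, `d aᵢ = aᵢ c`,
`c bᵢ = bᵢ d` (i = 1, 2) of the quiver `(Q, I)`. -/
def SatisfiesRelations (a₁ a₂ : V₀ →ₗ[ℂ] V₁) (b₁ b₂ : V₁ →ₗ[ℂ] V₀)
    (c : V₀ →ₗ[ℂ] V₀) (d : V₁ →ₗ[ℂ] V₁) : Prop :=
  a₂ ∘ₗ b₁ ∘ₗ a₁ = a₁ ∘ₗ b₁ ∘ₗ a₂ ∧ a₂ ∘ₗ b₂ ∘ₗ a₁ = a₁ ∘ₗ b₂ ∘ₗ a₂ ∧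
    b₂ ∘ₗ a₁ ∘ₗ b₁ = b₁ ∘ₗ a₁ ∘ₗ b₂ ∧ b₂ ∘ₗ a₂ ∘ₗ b₁ = b₁ ∘ₗ a₂ ∘ₗ b₂ ∧
    d ∘ₗ a₁ = a₁ ∘ₗ c ∧ d ∘ₗ a₂ = a₂ ∘ₗ c ∧
    c ∘ₗ b₁ = b₁ ∘ₗ d ∧ c ∘ₗ b₂ = b₂ ∘ₗ d

/-- The slope `μ_Θ` of a pair of dimensions `(n₀, n₁)` with respect to `Θ = (θ₀, θ₁)`. -/
noncomputable def slopeMu (θ₀ θ₁ : ℝ) (n₀ n₁ : ℕ) : ℝ :=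
  (θ₀ * (n₀ : ℝ) + θ₁ * (n₁ : ℝ)) / ((n₀ : ℝ) + (n₁ : ℝ))

/-- `Θ`-stability of the (nonzero) representation `(V₀, V₁)`: every subrepresentation
`(W₀, W₁)` with `0 ≠ (W₀, W₁) ⊊ (V₀, V₁)` has strictly smaller slope. -/
def IsThetaStable [FiniteDimensional ℂ V₀] [FiniteDimensional ℂ V₁]
    (θ₀ θ₁ : ℝ) (a₁ a₂ : V₀ →ₗ[ℂ] V₁) (b₁ b₂ : V₁ →ₗ[ℂ] V₀)
    (c : V₀ →ₗ[ℂ] V₀) (d : V₁ →ₗ[ℂ] V₁) : Prop :=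
  ∀ W₀ : Submodule ℂ V₀, ∀ W₁ : Submodule ℂ V₁,
    IsSubrep a₁ a₂ b₁ b₂ c d W₀ W₁ →
    ¬(W₀ = ⊥ ∧ W₁ = ⊥) → ¬(W₀ = ⊤ ∧ W₁ = ⊤) →
    slopeMu θ₀ θ₁ (finrank ℂ W₀) (finrank ℂ W₁) <
      slopeMu θ₀ θ₁ (finrank ℂ V₀) (finrank ℂ V₁)

/-! ### Auxiliary lemmas on slopes -/

lemma slopeMu_zero_left (θ₀ θ₁ : ℝ) {k : ℕ} (hk : 0 < k) : slopeMu θ₀ θ₁ 0 k = θ₁ := by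
  have h : (k : ℝ) ≠ 0 := (Nat.cast_pos.mpr hk).ne'
  rw [slopeMu]
  push_cast
  field_simp
  ring

lemma slopeMu_zero_right (θ₀ θ₁ : ℝ) {k : ℕ} (hk : 0 < k) : slopeMu θ₀ θ₁ k 0 = θ₀ := by
  have h : (k : ℝ) ≠ 0 := (Nat.cast_pos.mpr hk).ne'
  rw [slopeMu]
  push_cast
  field_simp
  ring

lemma slopeMu_one_one (θ₀ θ₁ : ℝ) {n : ℕ} (hn : 0 < n) :
    slopeMu θ₀ θ₁ 1 1 = slopeMu θ₀ θ₁ n n := by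
  have h : (n : ℝ) ≠ 0 := (Nat.cast_pos.mpr hn).ne'
  rw [slopeMu, slopeMu]
  push_cast
  field_simp

lemma slope_sum_contra (θ₀ θ₁ : ℝ) {k₀ k₁ r₀ r₁ : ℕ}
    (hk : 0 < k₀ + k₁) (hr : 0 < r₀ + r₁)
    (h1 : slopeMu θ₀ θ₁ k₀ k₁ < slopeMu θ₀ θ₁ (k₀ + r₀) (k₁ + r₁))
    (h2 : slopeMu θ₀ θ₁ r₀ r₁ < slopeMu θ₀ θ₁ (k₀ + r₀) (k₁ + r₁)) : False := by
  have hK : (0:ℝ) < (k₀:ℝ) + (k₁:ℝ) := by exact_mod_cast hk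
  have hR : (0:ℝ) < (r₀:ℝ) + (r₁:ℝ) := by exact_mod_cast hr
  have hN : (0:ℝ) < ((k₀ + r₀ : ℕ) : ℝ) + ((k₁ + r₁ : ℕ) : ℝ) := by push_cast; linarith
  rw [slopeMu, slopeMu, div_lt_div_iff₀ hK hN] at h1
  rw [slopeMu, slopeMu, div_lt_div_iff₀ hR hN] at h2
  push_cast at h1 h2
  nlinarith [h1, h2]

lemma slope_max_contra (θ₀ θ₁ : ℝ) {n₀ n₁ : ℕ} (h : 0 < n₀ + n₁)
    (h0 : θ₀ < slopeMu θ₀ θ₁ n₀ n₁) (h1 : θ₁ < slopeMu θ₀ θ₁ n₀ n₁) : False := by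
  have hN : (0:ℝ) < (n₀:ℝ) + (n₁:ℝ) := by exact_mod_cast h
  rw [slopeMu, lt_div_iff₀ hN] at h0 h1
  have c0 : (0:ℝ) ≤ (n₀:ℝ) := Nat.cast_nonneg _
  have c1 : (0:ℝ) ≤ (n₁:ℝ) := Nat.cast_nonneg _
  have A : 0 < (θ₁ - θ₀) * (n₁:ℝ) := by nlinarith
  have B : 0 < (θ₀ - θ₁) * (n₀:ℝ) := by nlinarith
  nlinarith [mul_pos A B, mul_nonneg (mul_nonneg c0 c1) (sq_nonneg (θ₀ - θ₁))]

/-! ### Schur lemma machinery -/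

/-- `(f₀, f₁)` is an endomorphism of the representation. -/
def IsEndo (a₁ a₂ : V₀ →ₗ[ℂ] V₁) (b₁ b₂ : V₁ →ₗ[ℂ] V₀)
    (c : V₀ →ₗ[ℂ] V₀) (d : V₁ →ₗ[ℂ] V₁)
    (f₀ : V₀ →ₗ[ℂ] V₀) (f₁ : V₁ →ₗ[ℂ] V₁) : Prop :=
  a₁ ∘ₗ f₀ = f₁ ∘ₗ a₁ ∧ a₂ ∘ₗ f₀ = f₁ ∘ₗ a₂ ∧
    b₁ ∘ₗ f₁ = f₀ ∘ₗ b₁ ∧ b₂ ∘ₗ f₁ = f₀ ∘ₗ b₂ ∧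
    c ∘ₗ f₀ = f₀ ∘ₗ c ∧ d ∘ₗ f₁ = f₁ ∘ₗ d

section Endo

variable {a₁ a₂ : V₀ →ₗ[ℂ] V₁} {b₁ b₂ : V₁ →ₗ[ℂ] V₀}
  {c : V₀ →ₗ[ℂ] V₀} {d : V₁ →ₗ[ℂ] V₁} {f₀ : V₀ →ₗ[ℂ] V₀} {f₁ : V₁ →ₗ[ℂ] V₁}

lemma IsEndo.ker_subrep (h : IsEndo a₁ a₂ b₁ b₂ c d f₀ f₁) :
    IsSubrep a₁ a₂ b₁ b₂ c d (LinearMap.ker f₀) (LinearMap.ker f₁) := by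
  obtain ⟨h1, h2, h3, h4, h5, h6⟩ := h
  refine ⟨fun x hx => ?_, fun x hx => ?_, fun y hy => ?_, fun y hy => ?_,
    fun x hx => ?_, fun y hy => ?_⟩ <;>
  simp only [LinearMap.mem_ker] at *
  · have := LinearMap.congr_fun h1 x; simp only [LinearMap.comp_apply] at this
    rw [← this, hx, map_zero]
  · have := LinearMap.congr_fun h2 x; simp only [LinearMap.comp_apply] at this
    rw [← this, hx, map_zero]
  · have := LinearMap.congr_fun h3 y; simp only [LinearMap.comp_apply] at this
    rw [← this, hy, map_zero]
  · have := LinearMap.congr_fun h4 y; simp only [LinearMap.comp_apply] at this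
    rw [← this, hy, map_zero]
  · have := LinearMap.congr_fun h5 x; simp only [LinearMap.comp_apply] at this
    rw [← this, hx, map_zero]
  · have := LinearMap.congr_fun h6 y; simp only [LinearMap.comp_apply] at this
    rw [← this, hy, map_zero]

lemma IsEndo.range_subrep (h : IsEndo a₁ a₂ b₁ b₂ c d f₀ f₁) :
    IsSubrep a₁ a₂ b₁ b₂ c d (LinearMap.range f₀) (LinearMap.range f₁) := by
  obtain ⟨h1, h2, h3, h4, h5, h6⟩ := h
  refine ⟨?_, ?_, ?_, ?_, ?_, ?_⟩
  · rintro x ⟨z, rfl⟩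
    exact ⟨a₁ z, by simpa using (LinearMap.congr_fun h1 z).symm⟩
  · rintro x ⟨z, rfl⟩
    exact ⟨a₂ z, by simpa using (LinearMap.congr_fun h2 z).symm⟩
  · rintro y ⟨z, rfl⟩
    exact ⟨b₁ z, by simpa using (LinearMap.congr_fun h3 z).symm⟩
  · rintro y ⟨z, rfl⟩
    exact ⟨b₂ z, by simpa using (LinearMap.congr_fun h4 z).symm⟩
  · rintro x ⟨z, rfl⟩
    exact ⟨c z, by simpa using (LinearMap.congr_fun h5 z).symm⟩
  · rintro y ⟨z, rfl⟩
    exact ⟨d z, by simpa using (LinearMap.congr_fun h6 z).symm⟩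

lemma finrank_pos_of_ne_bot {M : Type*} [AddCommGroup M] [Module ℂ M] [FiniteDimensional ℂ M]
    {W : Submodule ℂ M} (h : W ≠ ⊥) : 0 < finrank ℂ W :=
  finrank_pos_iff.mpr (Submodule.nontrivial_iff_ne_bot.mpr h)

lemma endo_eq_zero [FiniteDimensional ℂ V₀] [FiniteDimensional ℂ V₁] {θ₀ θ₁ : ℝ}
    (hstab : IsThetaStable θ₀ θ₁ a₁ a₂ b₁ b₂ c d)
    (hend : IsEndo a₁ a₂ b₁ b₂ c d f₀ f₁)
    (hker : ¬(LinearMap.ker f₀ = ⊥ ∧ LinearMap.ker f₁ = ⊥)) :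
    f₀ = 0 ∧ f₁ = 0 := by
  by_cases htop : LinearMap.ker f₀ = ⊤ ∧ LinearMap.ker f₁ = ⊤
  · exact ⟨LinearMap.ker_eq_top.mp htop.1, LinearMap.ker_eq_top.mp htop.2⟩
  exfalso
  have hK := hstab _ _ hend.ker_subrep hker htop
  have hkpos : 0 < finrank ℂ (LinearMap.ker f₀) + finrank ℂ (LinearMap.ker f₁) := by
    rcases not_and_or.mp hker with h | h
    · have := finrank_pos_of_ne_bot h; omega
    · have := finrank_pos_of_ne_bot h; omega
  have hrtop : ¬(LinearMap.range f₀ = ⊤ ∧ LinearMap.range f₁ = ⊤) := by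
    rintro ⟨h0, h1⟩
    have e0 := LinearMap.finrank_range_add_finrank_ker f₀
    have e1 := LinearMap.finrank_range_add_finrank_ker f₁
    rw [h0, finrank_top] at e0
    rw [h1, finrank_top] at e1
    have k0 : finrank ℂ (LinearMap.ker f₀) = 0 := by omega
    have k1 : finrank ℂ (LinearMap.ker f₁) = 0 := by omega
    exact hker ⟨Submodule.finrank_eq_zero.mp k0, Submodule.finrank_eq_zero.mp k1⟩
  have hrbot : ¬(LinearMap.range f₀ = ⊥ ∧ LinearMap.range f₁ = ⊥) := by
    rintro ⟨h0, h1⟩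
    exact htop ⟨by rw [LinearMap.ker_eq_top, ← LinearMap.range_eq_bot]; exact h0,
      by rw [LinearMap.ker_eq_top, ← LinearMap.range_eq_bot]; exact h1⟩
  have hR := hstab _ _ hend.range_subrep hrbot hrtop
  have hrpos : 0 < finrank ℂ (LinearMap.range f₀) + finrank ℂ (LinearMap.range f₁) := by
    rcases not_and_or.mp hrbot with h | h
    · have := finrank_pos_of_ne_bot h; omega
    · have := finrank_pos_of_ne_bot h; omega
  have e0 := LinearMap.finrank_range_add_finrank_ker f₀
  have e1 := LinearMap.finrank_range_add_finrank_ker f₁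
  refine slope_sum_contra θ₀ θ₁ hkpos hrpos ?_ ?_
  · convert hK using 2 <;> omega
  · convert hR using 2 <;> omega

lemma endo_scalar [FiniteDimensional ℂ V₀] [FiniteDimensional ℂ V₁] {θ₀ θ₁ : ℝ}
    (hne : 0 < finrank ℂ V₀ + finrank ℂ V₁)
    (hstab : IsThetaStable θ₀ θ₁ a₁ a₂ b₁ b₂ c d)
    (hend : IsEndo a₁ a₂ b₁ b₂ c d f₀ f₁) :
    ∃ l : ℂ, f₀ = l • LinearMap.id ∧ f₁ = l • LinearMap.id := by
  have hnt : Nontrivial (V₀ × V₁) := by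
    rcases Nat.lt_or_ge 0 (finrank ℂ V₀) with h | h
    · have : Nontrivial V₀ := finrank_pos_iff.mp h
      exact nontrivial_prod_left
    · have hp : 0 < finrank ℂ V₁ := by omega
      have : Nontrivial V₁ := finrank_pos_iff.mp hp
      exact nontrivial_prod_right
  obtain ⟨l, hl⟩ := Module.End.exists_eigenvalue (f₀.prodMap f₁ : Module.End ℂ (V₀ × V₁))
  obtain ⟨v, hv⟩ := hl.exists_hasEigenvector
  have happ : f₀ v.1 = l • v.1 ∧ f₁ v.2 = l • v.2 := by
    have := hv.apply_eq_smul
    exact ⟨congrArg Prod.fst this, congrArg Prod.snd this⟩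
  obtain ⟨h1, h2, h3, h4, h5, h6⟩ := hend
  have hend' : IsEndo a₁ a₂ b₁ b₂ c d (f₀ - l • LinearMap.id) (f₁ - l • LinearMap.id) := by
    refine ⟨?_, ?_, ?_, ?_, ?_, ?_⟩ <;> ext x <;>
      simp only [LinearMap.comp_apply, LinearMap.sub_apply, LinearMap.smul_apply,
        LinearMap.id_apply, map_sub, map_smul]
    · have := LinearMap.congr_fun h1 x; simp only [LinearMap.comp_apply] at this; rw [this]
    · have := LinearMap.congr_fun h2 x; simp only [LinearMap.comp_apply] at this; rw [this]
    · have := LinearMap.congr_fun h3 x; simp only [LinearMap.comp_apply] at this; rw [this]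
    · have := LinearMap.congr_fun h4 x; simp only [LinearMap.comp_apply] at this; rw [this]
    · have := LinearMap.congr_fun h5 x; simp only [LinearMap.comp_apply] at this; rw [this]
    · have := LinearMap.congr_fun h6 x; simp only [LinearMap.comp_apply] at this; rw [this]
  have hker : ¬(LinearMap.ker (f₀ - l • LinearMap.id) = ⊥ ∧
      LinearMap.ker (f₁ - l • LinearMap.id) = ⊥) := by
    rintro ⟨k0, k1⟩
    have m0 : v.1 ∈ LinearMap.ker (f₀ - l • LinearMap.id) := by
      simp [LinearMap.mem_ker, happ.1, sub_self]
    have m1 : v.2 ∈ LinearMap.ker (f₁ - l • LinearMap.id) := by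
      simp [LinearMap.mem_ker, happ.2, sub_self]
    rw [k0, Submodule.mem_bot] at m0
    rw [k1, Submodule.mem_bot] at m1
    exact hv.2 (Prod.ext m0 m1)
  obtain ⟨z0, z1⟩ := endo_eq_zero hstab hend' hker
  exact ⟨l, by rwa [sub_eq_zero] at z0, by rwa [sub_eq_zero] at z1⟩

lemma IsThetaStable.swap_a [FiniteDimensional ℂ V₀] [FiniteDimensional ℂ V₁] {θ₀ θ₁ : ℝ}
    (h : IsThetaStable θ₀ θ₁ a₁ a₂ b₁ b₂ c d) :
    IsThetaStable θ₀ θ₁ a₂ a₁ b₁ b₂ c d :=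
  fun W₀ W₁ hs => h W₀ W₁ ⟨hs.2.1, hs.1, hs.2.2⟩

lemma IsThetaStable.swap_b [FiniteDimensional ℂ V₀] [FiniteDimensional ℂ V₁] {θ₀ θ₁ : ℝ}
    (h : IsThetaStable θ₀ θ₁ a₁ a₂ b₁ b₂ c d) :
    IsThetaStable θ₀ θ₁ a₁ a₂ b₂ b₁ c d :=
  fun W₀ W₁ hs => h W₀ W₁ ⟨hs.1, hs.2.1, hs.2.2.2.1, hs.2.2.1, hs.2.2.2.2⟩

/-- If some composition `b₁ ∘ a₁` is a nonzero scalar, the dimension vector is `(1,1)`. -/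
lemma dims_one [FiniteDimensional ℂ V₀] [FiniteDimensional ℂ V₁] {θ₀ θ₁ : ℝ}
    (hstab : IsThetaStable θ₀ θ₁ a₁ a₂ b₁ b₂ c d)
    (hpos0 : 0 < finrank ℂ V₀)
    (hd1 : d ∘ₗ a₁ = a₁ ∘ₗ c) (hd2 : d ∘ₗ a₂ = a₂ ∘ₗ c)
    {μ11 μ12 μ21 : ℂ} (hμ : μ11 ≠ 0)
    (h11 : b₁ ∘ₗ a₁ = μ11 • LinearMap.id) (h11' : a₁ ∘ₗ b₁ = μ11 • LinearMap.id)
    (h12 : b₁ ∘ₗ a₂ = μ12 • LinearMap.id)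
    (h21 : b₂ ∘ₗ a₁ = μ21 • LinearMap.id) :
    finrank ℂ V₀ = 1 ∧ finrank ℂ V₁ = 1 := by
  have P11 : ∀ x, b₁ (a₁ x) = μ11 • x := fun x => by
    simpa using LinearMap.congr_fun h11 x
  have P11' : ∀ y, a₁ (b₁ y) = μ11 • y := fun y => by
    simpa using LinearMap.congr_fun h11' y
  have P12 : ∀ x, b₁ (a₂ x) = μ12 • x := fun x => by
    simpa using LinearMap.congr_fun h12 x
  have P21 : ∀ x, b₂ (a₁ x) = μ21 • x := fun x => by
    simpa using LinearMap.congr_fun h21 x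
  have D1 : ∀ x, d (a₁ x) = a₁ (c x) := fun x => by
    simpa using LinearMap.congr_fun hd1 x
  -- a₂ is a scalar multiple of a₁
  have ha2 : ∀ x, a₂ x = (μ11⁻¹ * μ12) • a₁ x := by
    intro x
    have key : μ11 • a₂ x = μ12 • a₁ x := by
      rw [← P11' (a₂ x), P12 x, map_smul]
    calc a₂ x = μ11⁻¹ • (μ11 • a₂ x) := by
          rw [smul_smul, inv_mul_cancel₀ hμ, one_smul]
      _ = (μ11⁻¹ * μ12) • a₁ x := by rw [key, smul_smul]
  -- a₁ is bijective
  have hinj : Function.Injective a₁ := by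
    intro u w huw
    have : μ11 • u = μ11 • w := by rw [← P11 u, ← P11 w, huw]
    exact smul_right_injective _ hμ this
  have hsurj : Function.Surjective a₁ := by
    intro y
    refine ⟨μ11⁻¹ • b₁ y, ?_⟩
    rw [map_smul, P11' y, smul_smul, inv_mul_cancel₀ hμ, one_smul]
  have heq : finrank ℂ V₀ = finrank ℂ V₁ :=
    (LinearEquiv.ofBijective a₁ ⟨hinj, hsurj⟩).finrank_eq
  -- an eigenvector of c
  have hntV₀ : Nontrivial V₀ := finrank_pos_iff.mp hpos0
  obtain ⟨lc, hlc⟩ := Module.End.exists_eigenvalue (c : Module.End ℂ V₀)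
  obtain ⟨v, hv⟩ := hlc.exists_hasEigenvector
  have hcv : c v = lc • v := hv.apply_eq_smul
  have hvne : v ≠ 0 := hv.2
  have hav : a₁ v ≠ 0 := fun h => hvne (hinj (by rw [h, map_zero]))
  -- the (1,1)-dimensional subrepresentation
  set W₀ : Submodule ℂ V₀ := Submodule.span ℂ {v} with hW₀
  set W₁ : Submodule ℂ V₁ := Submodule.span ℂ {a₁ v} with hW₁
  have hsub : IsSubrep a₁ a₂ b₁ b₂ c d W₀ W₁ := by
    refine ⟨?_, ?_, ?_, ?_, ?_, ?_⟩
    · intro x hx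
      obtain ⟨t, rfl⟩ := Submodule.mem_span_singleton.mp hx
      exact Submodule.mem_span_singleton.mpr ⟨t, by rw [map_smul]⟩
    · intro x hx
      obtain ⟨t, rfl⟩ := Submodule.mem_span_singleton.mp hx
      exact Submodule.mem_span_singleton.mpr ⟨t * (μ11⁻¹ * μ12), by
        rw [map_smul, ha2 v, smul_smul]⟩
    · intro y hy
      obtain ⟨t, rfl⟩ := Submodule.mem_span_singleton.mp hy
      exact Submodule.mem_span_singleton.mpr ⟨t * μ11, by
        rw [map_smul, P11 v, smul_smul]⟩
    · intro y hy
      obtain ⟨t, rfl⟩ := Submodule.mem_span_singleton.mp hy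
      exact Submodule.mem_span_singleton.mpr ⟨t * μ21, by
        rw [map_smul, P21 v, smul_smul]⟩
    · intro x hx
      obtain ⟨t, rfl⟩ := Submodule.mem_span_singleton.mp hx
      exact Submodule.mem_span_singleton.mpr ⟨t * lc, by
        rw [map_smul, hcv, smul_smul]⟩
    · intro y hy
      obtain ⟨t, rfl⟩ := Submodule.mem_span_singleton.mp hy
      exact Submodule.mem_span_singleton.mpr ⟨t * lc, by
        rw [map_smul, D1 v, hcv, map_smul, smul_smul]⟩
  have hnb : ¬(W₀ = ⊥ ∧ W₁ = ⊥) := by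
    rintro ⟨h, -⟩
    exact hvne (Submodule.span_singleton_eq_bot.mp h)
  have frW₀ : finrank ℂ W₀ = 1 := finrank_span_singleton hvne
  have frW₁ : finrank ℂ W₁ = 1 := finrank_span_singleton hav
  rcases eq_or_ne (finrank ℂ V₀) 1 with hone | hone
  · exact ⟨hone, by rw [← heq]; exact hone⟩
  exfalso
  have hnt : ¬(W₀ = ⊤ ∧ W₁ = ⊤) := by
    rintro ⟨h, -⟩
    apply hone
    rw [← finrank_top ℂ V₀, ← h, frW₀]
  have hs := hstab W₀ W₁ hsub hnb hnt
  rw [frW₀, frW₁, ← heq, ← slopeMu_one_one θ₀ θ₁ hpos0] at hs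
  exact lt_irrefl _ hs

end Endo

/-- Trichotomy lemma: a nonzero finite-dimensional `Θ`-stable representation
of `(Q, I)` satisfies `dim V₀ = dim V₁ = 1`, or `a₁ = a₂ = 0`, or `b₁ = b₂ = 0`. -/
theorem trichotomy_of_theta_stable
    [FiniteDimensional ℂ V₀] [FiniteDimensional ℂ V₁]
    (θ₀ θ₁ : ℝ) (a₁ a₂ : V₀ →ₗ[ℂ] V₁) (b₁ b₂ : V₁ →ₗ[ℂ] V₀)
    (c : V₀ →ₗ[ℂ] V₀) (d : V₁ →ₗ[ℂ] V₁)
    (hrel : SatisfiesRelations a₁ a₂ b₁ b₂ c d)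
    (hne : 0 < finrank ℂ V₀ + finrank ℂ V₁)
    (hstab : IsThetaStable θ₀ θ₁ a₁ a₂ b₁ b₂ c d) :
    (finrank ℂ V₀ = 1 ∧ finrank ℂ V₁ = 1) ∨ (a₁ = 0 ∧ a₂ = 0) ∨ (b₁ = 0 ∧ b₂ = 0) := by
  rcases Nat.eq_zero_or_pos (finrank ℂ V₁) with hz1 | hpos1
  · have : Subsingleton V₁ := finrank_zero_iff.mp hz1
    exact Or.inr (Or.inl ⟨LinearMap.ext fun x => Subsingleton.elim _ _,
      LinearMap.ext fun x => Subsingleton.elim _ _⟩)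
  rcases Nat.eq_zero_or_pos (finrank ℂ V₀) with hz0 | hpos0
  · have : Subsingleton V₀ := finrank_zero_iff.mp hz0
    exact Or.inr (Or.inr ⟨LinearMap.ext fun x => Subsingleton.elim _ _,
      LinearMap.ext fun x => Subsingleton.elim _ _⟩)
  obtain ⟨r1, r2, r3, r4, r5, r6, r7, r8⟩ := hrel
  -- pointwise versions of the relations
  have R1 : ∀ x, a₂ (b₁ (a₁ x)) = a₁ (b₁ (a₂ x)) := fun x => by
    simpa using LinearMap.congr_fun r1 x
  have R2 : ∀ x, a₂ (b₂ (a₁ x)) = a₁ (b₂ (a₂ x)) := fun x => by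
    simpa using LinearMap.congr_fun r2 x
  have R3 : ∀ y, b₂ (a₁ (b₁ y)) = b₁ (a₁ (b₂ y)) := fun y => by
    simpa using LinearMap.congr_fun r3 y
  have R4 : ∀ y, b₂ (a₂ (b₁ y)) = b₁ (a₂ (b₂ y)) := fun y => by
    simpa using LinearMap.congr_fun r4 y
  have R5 : ∀ x, d (a₁ x) = a₁ (c x) := fun x => by
    simpa using LinearMap.congr_fun r5 x
  have R6 : ∀ x, d (a₂ x) = a₂ (c x) := fun x => by
    simpa using LinearMap.congr_fun r6 x
  have R7 : ∀ y, c (b₁ y) = b₁ (d y) := fun y => by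
    simpa using LinearMap.congr_fun r7 y
  have R8 : ∀ y, c (b₂ y) = b₂ (d y) := fun y => by
    simpa using LinearMap.congr_fun r8 y
  -- the four composition endomorphisms
  have E11 : IsEndo a₁ a₂ b₁ b₂ c d (b₁ ∘ₗ a₁) (a₁ ∘ₗ b₁) := by
    refine ⟨?_, ?_, ?_, ?_, ?_, ?_⟩ <;> ext x <;> simp only [LinearMap.comp_apply]
    · exact R1 x
    · exact R3 x
    · rw [R7, R5]
    · rw [R5, R7]
  have E12 : IsEndo a₁ a₂ b₁ b₂ c d (b₁ ∘ₗ a₂) (a₂ ∘ₗ b₁) := by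
    refine ⟨?_, ?_, ?_, ?_, ?_, ?_⟩ <;> ext x <;> simp only [LinearMap.comp_apply]
    · exact (R1 x).symm
    · exact R4 x
    · rw [R7, R6]
    · rw [R6, R7]
  have E21 : IsEndo a₁ a₂ b₁ b₂ c d (b₂ ∘ₗ a₁) (a₁ ∘ₗ b₂) := by
    refine ⟨?_, ?_, ?_, ?_, ?_, ?_⟩ <;> ext x <;> simp only [LinearMap.comp_apply]
    · exact R2 x
    · exact (R3 x).symm
    · rw [R8, R5]
    · rw [R5, R8]
  have E22 : IsEndo a₁ a₂ b₁ b₂ c d (b₂ ∘ₗ a₂) (a₂ ∘ₗ b₂) := by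
    refine ⟨?_, ?_, ?_, ?_, ?_, ?_⟩ <;> ext x <;> simp only [LinearMap.comp_apply]
    · exact (R2 x).symm
    · exact (R4 x).symm
    · rw [R8, R6]
    · rw [R6, R8]
  obtain ⟨m11, hm11, hm11'⟩ := endo_scalar hne hstab E11
  obtain ⟨m12, hm12, hm12'⟩ := endo_scalar hne hstab E12
  obtain ⟨m21, hm21, hm21'⟩ := endo_scalar hne hstab E21
  obtain ⟨m22, hm22, hm22'⟩ := endo_scalar hne hstab E22
  by_cases hall : m11 = 0 ∧ m12 = 0 ∧ m21 = 0 ∧ m22 = 0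
  · -- all compositions vanish
    obtain ⟨z11, z12, z21, z22⟩ := hall
    have Z11 : ∀ x, b₁ (a₁ x) = 0 := fun x => by
      have := LinearMap.congr_fun hm11 x; simpa [z11] using this
    have Z12 : ∀ x, b₁ (a₂ x) = 0 := fun x => by
      have := LinearMap.congr_fun hm12 x; simpa [z12] using this
    have Z21 : ∀ x, b₂ (a₁ x) = 0 := fun x => by
      have := LinearMap.congr_fun hm21 x; simpa [z21] using this
    have Z22 : ∀ x, b₂ (a₂ x) = 0 := fun x => by
      have := LinearMap.congr_fun hm22 x; simpa [z22] using this
    have Z11' : ∀ y, a₁ (b₁ y) = 0 := fun y => by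
      have := LinearMap.congr_fun hm11' y; simpa [z11] using this
    have Z12' : ∀ y, a₂ (b₁ y) = 0 := fun y => by
      have := LinearMap.congr_fun hm12' y; simpa [z12] using this
    have Z21' : ∀ y, a₁ (b₂ y) = 0 := fun y => by
      have := LinearMap.congr_fun hm21' y; simpa [z21] using this
    have Z22' : ∀ y, a₂ (b₂ y) = 0 := fun y => by
      have := LinearMap.congr_fun hm22' y; simpa [z22] using this
    by_contra hcon
    push_neg at hcon
    obtain ⟨-, hA, hB⟩ := hcon
    have hntV₀ : Nontrivial V₀ := finrank_pos_iff.mp hpos0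
    have hntV₁ : Nontrivial V₁ := finrank_pos_iff.mp hpos1
    -- the subrepresentation (⊥, range a₁ ⊔ range a₂)
    set U₁ : Submodule ℂ V₁ := LinearMap.range a₁ ⊔ LinearMap.range a₂ with hU₁
    have hU₁ne : U₁ ≠ ⊥ := by
      intro h
      have h1 : LinearMap.range a₁ = ⊥ := le_bot_iff.mp (h ▸ le_sup_left)
      have h2 : LinearMap.range a₂ = ⊥ := le_bot_iff.mp (h ▸ le_sup_right)
      exact hA (LinearMap.range_eq_bot.mp h1) (LinearMap.range_eq_bot.mp h2)
    have hsub1 : IsSubrep a₁ a₂ b₁ b₂ c d ⊥ U₁ := by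
      refine ⟨?_, ?_, ?_, ?_, ?_, ?_⟩
      · intro x hx
        rw [Submodule.mem_bot] at hx
        rw [hx, map_zero]; exact Submodule.zero_mem _
      · intro x hx
        rw [Submodule.mem_bot] at hx
        rw [hx, map_zero]; exact Submodule.zero_mem _
      · intro y hy
        rw [Submodule.mem_sup] at hy
        obtain ⟨u, hu, w, hw, rfl⟩ := hy
        obtain ⟨x, rfl⟩ := LinearMap.mem_range.mp hu
        obtain ⟨x', rfl⟩ := LinearMap.mem_range.mp hw
        rw [Submodule.mem_bot, map_add, Z11 x, Z12 x', add_zero]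
      · intro y hy
        rw [Submodule.mem_sup] at hy
        obtain ⟨u, hu, w, hw, rfl⟩ := hy
        obtain ⟨x, rfl⟩ := LinearMap.mem_range.mp hu
        obtain ⟨x', rfl⟩ := LinearMap.mem_range.mp hw
        rw [Submodule.mem_bot, map_add, Z21 x, Z22 x', add_zero]
      · intro x hx
        rw [Submodule.mem_bot] at hx
        rw [hx, map_zero]; exact Submodule.zero_mem _
      · intro y hy
        rw [Submodule.mem_sup] at hy
        obtain ⟨u, hu, w, hw, rfl⟩ := hy
        obtain ⟨x, rfl⟩ := LinearMap.mem_range.mp hu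
        obtain ⟨x', rfl⟩ := LinearMap.mem_range.mp hw
        rw [map_add, R5, R6]
        exact Submodule.add_mem _
          (Submodule.mem_sup_left (LinearMap.mem_range.mpr ⟨c x, rfl⟩))
          (Submodule.mem_sup_right (LinearMap.mem_range.mpr ⟨c x', rfl⟩))
    have hs1 := hstab ⊥ U₁ hsub1 (fun h => hU₁ne h.2)
      (fun h => (bot_ne_top : (⊥ : Submodule ℂ V₀) ≠ ⊤) h.1)
    rw [finrank_bot, slopeMu_zero_left θ₀ θ₁ (finrank_pos_of_ne_bot hU₁ne)] at hs1
    -- the subrepresentation (range b₁ ⊔ range b₂, ⊥)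
    set U₀ : Submodule ℂ V₀ := LinearMap.range b₁ ⊔ LinearMap.range b₂ with hU₀
    have hU₀ne : U₀ ≠ ⊥ := by
      intro h
      have h1 : LinearMap.range b₁ = ⊥ := le_bot_iff.mp (h ▸ le_sup_left)
      have h2 : LinearMap.range b₂ = ⊥ := le_bot_iff.mp (h ▸ le_sup_right)
      exact hB (LinearMap.range_eq_bot.mp h1) (LinearMap.range_eq_bot.mp h2)
    have hsub0 : IsSubrep a₁ a₂ b₁ b₂ c d U₀ ⊥ := by
      refine ⟨?_, ?_, ?_, ?_, ?_, ?_⟩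
      · intro x hx
        rw [Submodule.mem_sup] at hx
        obtain ⟨u, hu, w, hw, rfl⟩ := hx
        obtain ⟨y, rfl⟩ := LinearMap.mem_range.mp hu
        obtain ⟨y', rfl⟩ := LinearMap.mem_range.mp hw
        rw [Submodule.mem_bot, map_add, Z11' y, Z21' y', add_zero]
      · intro x hx
        rw [Submodule.mem_sup] at hx
        obtain ⟨u, hu, w, hw, rfl⟩ := hx
        obtain ⟨y, rfl⟩ := LinearMap.mem_range.mp hu
        obtain ⟨y', rfl⟩ := LinearMap.mem_range.mp hw
        rw [Submodule.mem_bot, map_add, Z12' y, Z22' y', add_zero]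
      · intro y hy
        rw [Submodule.mem_bot] at hy
        rw [hy, map_zero]; exact Submodule.zero_mem _
      · intro y hy
        rw [Submodule.mem_bot] at hy
        rw [hy, map_zero]; exact Submodule.zero_mem _
      · intro x hx
        rw [Submodule.mem_sup] at hx
        obtain ⟨u, hu, w, hw, rfl⟩ := hx
        obtain ⟨y, rfl⟩ := LinearMap.mem_range.mp hu
        obtain ⟨y', rfl⟩ := LinearMap.mem_range.mp hw
        rw [map_add, R7, R8]
        exact Submodule.add_mem _
          (Submodule.mem_sup_left (LinearMap.mem_range.mpr ⟨d y, rfl⟩))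
          (Submodule.mem_sup_right (LinearMap.mem_range.mpr ⟨d y', rfl⟩))
      · intro y hy
        rw [Submodule.mem_bot] at hy
        rw [hy, map_zero]; exact Submodule.zero_mem _
    have hs0 := hstab U₀ ⊥ hsub0 (fun h => hU₀ne h.1)
      (fun h => (bot_ne_top : (⊥ : Submodule ℂ V₁) ≠ ⊤) h.2)
    rw [finrank_bot, slopeMu_zero_right θ₀ θ₁ (finrank_pos_of_ne_bot hU₀ne)] at hs0
    exact slope_max_contra θ₀ θ₁ hne hs0 hs1
  · -- some composition is a nonzero scalar: dimension vector is (1,1)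
    left
    have hsome : m11 ≠ 0 ∨ m12 ≠ 0 ∨ m21 ≠ 0 ∨ m22 ≠ 0 := by tauto
    rcases hsome with h | h | h | h
    · exact dims_one hstab hpos0 r5 r6 h hm11 hm11' hm12 hm21
    · exact dims_one hstab.swap_a hpos0 r6 r5 h hm12 hm12' hm11 hm22
    · exact dims_one hstab.swap_b hpos0 r5 r6 h hm21 hm21' hm22 hm11
    · exact dims_one hstab.swap_a.swap_b hpos0 r6 r5 h hm22 hm22' hm21 hm12
end

section
/- Let Θ = (θ_0, θ_1) ∈ ℝ² and let V = (V_0, V_1) be a nonzero finite-dimensional Θ-stable representation of (Q,I) with θ_0·dim V_0 + θ_1·dim V_1 = 0. Then for every pair (i, j) ∈ {1,2}², either b_j ∘ a_i = 0 and a_i ∘ b_j = 0, or both a_i : V_0 → V_1 and b_j : V_1 → V_0 are bijective (in particular dim V_0 = dim V_1). (Key dichotomy step in the proof of the trichotomy lemma; it uses that (Ker(b_j a_i), Ker(a_i b_j)) and (Im(b_j a_i), Im(a_i b_j)) are subrepresentations of V.) -/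
open Module

variable {V₀ V₁ : Type*} [AddCommGroup V₀] [Module ℂ V₀] [AddCommGroup V₁] [Module ℂ V₁]

/-- Key dichotomy: for a nonzero `Θ`-stable representation with
`θ₀·dim V₀ + θ₁·dim V₁ = 0`, for each pair `(i, j) ∈ {1,2}²` either `bⱼ ∘ aᵢ = 0` and
`aᵢ ∘ bⱼ = 0`, or both `aᵢ` and `bⱼ` are bijective (in particular `dim V₀ = dim V₁`). -/
theorem dichotomy_of_theta_stable
    [FiniteDimensional ℂ V₀] [FiniteDimensional ℂ V₁]
    (θ₀ θ₁ : ℝ) (a₁ a₂ : V₀ →ₗ[ℂ] V₁) (b₁ b₂ : V₁ →ₗ[ℂ] V₀)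
    (c : V₀ →ₗ[ℂ] V₀) (d : V₁ →ₗ[ℂ] V₁)
    (hrel : SatisfiesRelations a₁ a₂ b₁ b₂ c d)
    (hne : 0 < finrank ℂ V₀ + finrank ℂ V₁)
    (hstab : IsThetaStable θ₀ θ₁ a₁ a₂ b₁ b₂ c d)
    (hzero : θ₀ * (finrank ℂ V₀ : ℝ) + θ₁ * (finrank ℂ V₁ : ℝ) = 0) :
    ∀ a : V₀ →ₗ[ℂ] V₁, ∀ b : V₁ →ₗ[ℂ] V₀, (a = a₁ ∨ a = a₂) → (b = b₁ ∨ b = b₂) →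
      (b ∘ₗ a = 0 ∧ a ∘ₗ b = 0) ∨
        (Function.Bijective a ∧ Function.Bijective b ∧ finrank ℂ V₀ = finrank ℂ V₁) := by
  
  obtain ⟨r1, r2, r3, r4, r5, r6, r7, r8⟩ := hrel
  intro a b ha hb
  -- pointwise versions of the relations
  have p1 : ∀ x, a₂ (b₁ (a₁ x)) = a₁ (b₁ (a₂ x)) := fun x => by
    simpa using LinearMap.congr_fun r1 x
  have p2 : ∀ x, a₂ (b₂ (a₁ x)) = a₁ (b₂ (a₂ x)) := fun x => by
    simpa using LinearMap.congr_fun r2 x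
  have p3 : ∀ y, b₂ (a₁ (b₁ y)) = b₁ (a₁ (b₂ y)) := fun y => by
    simpa using LinearMap.congr_fun r3 y
  have p4 : ∀ y, b₂ (a₂ (b₁ y)) = b₁ (a₂ (b₂ y)) := fun y => by
    simpa using LinearMap.congr_fun r4 y
  have p5 : ∀ x, d (a₁ x) = a₁ (c x) := fun x => by
    simpa using LinearMap.congr_fun r5 x
  have p6 : ∀ x, d (a₂ x) = a₂ (c x) := fun x => by
    simpa using LinearMap.congr_fun r6 x
  have p7 : ∀ y, c (b₁ y) = b₁ (d y) := fun y => by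
    simpa using LinearMap.congr_fun r7 y
  have p8 : ∀ y, c (b₂ y) = b₂ (d y) := fun y => by
    simpa using LinearMap.congr_fun r8 y
  -- commutation identities
  have ca : ∀ a' : V₀ →ₗ[ℂ] V₁, (a' = a₁ ∨ a' = a₂) → ∀ x, a' (b (a x)) = a (b (a' x)) := by
    rcases ha with rfl | rfl <;> rcases hb with rfl | rfl <;> rintro a' (rfl | rfl) x <;>
      first | rfl | exact p1 x | exact (p1 x).symm | exact p2 x | exact (p2 x).symm
  have cb : ∀ b' : V₁ →ₗ[ℂ] V₀, (b' = b₁ ∨ b' = b₂) → ∀ y, b' (a (b y)) = b (a (b' y)) := by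
    rcases ha with rfl | rfl <;> rcases hb with rfl | rfl <;> rintro b' (rfl | rfl) y <;>
      first | rfl | exact p3 y | exact (p3 y).symm | exact p4 y | exact (p4 y).symm
  have cc : ∀ x, c (b (a x)) = b (a (c x)) := by
    rcases ha with rfl | rfl <;> rcases hb with rfl | rfl <;> intro x <;>
      simp only [p5, p6, p7, p8]
  have cd : ∀ y, d (a (b y)) = a (b (d y)) := by
    rcases ha with rfl | rfl <;> rcases hb with rfl | rfl <;> intro y <;>
      simp only [p5, p6, p7, p8]
  set f : V₀ →ₗ[ℂ] V₀ := b ∘ₗ a with hf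
  set g : V₁ →ₗ[ℂ] V₁ := a ∘ₗ b with hg
  -- the kernel pair is a subrepresentation
  have hKsub : IsSubrep a₁ a₂ b₁ b₂ c d (LinearMap.ker f) (LinearMap.ker g) := by
    refine ⟨fun x hx => ?_, fun x hx => ?_, fun x hx => ?_, fun x hx => ?_,
      fun x hx => ?_, fun x hx => ?_⟩ <;>
      rw [LinearMap.mem_ker] at hx ⊢ <;>
      simp only [hf, hg, LinearMap.comp_apply] at hx ⊢
    · rw [← ca a₁ (Or.inl rfl), hx, map_zero]
    · rw [← ca a₂ (Or.inr rfl), hx, map_zero]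
    · rw [← cb b₁ (Or.inl rfl), hx, map_zero]
    · rw [← cb b₂ (Or.inr rfl), hx, map_zero]
    · rw [← cc, hx, map_zero]
    · rw [← cd, hx, map_zero]
  -- the image pair is a subrepresentation
  have hJsub : IsSubrep a₁ a₂ b₁ b₂ c d (LinearMap.range f) (LinearMap.range g) := by
    refine ⟨?_, ?_, ?_, ?_, ?_, ?_⟩ <;> rintro _ ⟨x, rfl⟩
    · exact ⟨a₁ x, (ca a₁ (Or.inl rfl) x).symm⟩
    · exact ⟨a₂ x, (ca a₂ (Or.inr rfl) x).symm⟩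
    · exact ⟨b₁ x, (cb b₁ (Or.inl rfl) x).symm⟩
    · exact ⟨b₂ x, (cb b₂ (Or.inr rfl) x).symm⟩
    · exact ⟨c x, (cc x).symm⟩
    · exact ⟨d x, (cd x).symm⟩
  -- stability gives a strict sign for proper nonzero subreps
  have key : ∀ W₀ : Submodule ℂ V₀, ∀ W₁ : Submodule ℂ V₁,
      IsSubrep a₁ a₂ b₁ b₂ c d W₀ W₁ → ¬(W₀ = ⊥ ∧ W₁ = ⊥) → ¬(W₀ = ⊤ ∧ W₁ = ⊤) →
      θ₀ * (finrank ℂ W₀ : ℝ) + θ₁ * (finrank ℂ W₁ : ℝ) < 0 := by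
    intro W₀ W₁ hsub h1 h2
    have h := hstab W₀ W₁ hsub h1 h2
    unfold slopeMu at h
    rw [hzero, zero_div] at h
    have hd : (0 : ℝ) ≤ (finrank ℂ W₀ : ℝ) + (finrank ℂ W₁ : ℝ) := by positivity
    rcases div_neg_iff.mp h with ⟨_, h'⟩ | ⟨h', _⟩
    · linarith
    · exact h'
  -- rank-nullity
  have e0 : (finrank ℂ (LinearMap.range f) : ℝ) + (finrank ℂ (LinearMap.ker f) : ℝ)
      = (finrank ℂ V₀ : ℝ) := by exact_mod_cast LinearMap.finrank_range_add_finrank_ker f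
  have e1 : (finrank ℂ (LinearMap.range g) : ℝ) + (finrank ℂ (LinearMap.ker g) : ℝ)
      = (finrank ℂ V₁ : ℝ) := by exact_mod_cast LinearMap.finrank_range_add_finrank_ker g
  by_cases hK1 : LinearMap.ker f = ⊥ ∧ LinearMap.ker g = ⊥
  · -- injective case
    have hfinj : Function.Injective f := LinearMap.ker_eq_bot.mp hK1.1
    have hginj : Function.Injective g := LinearMap.ker_eq_bot.mp hK1.2
    have hainj : Function.Injective a := fun x y hxy => hfinj (by
      simp only [hf, LinearMap.comp_apply, hxy])
    have hbinj : Function.Injective b := fun x y hxy => hginj (by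
      simp only [hg, LinearMap.comp_apply, hxy])
    have hdim : finrank ℂ V₀ = finrank ℂ V₁ :=
      le_antisymm (LinearMap.finrank_le_finrank_of_injective hainj)
        (LinearMap.finrank_le_finrank_of_injective hbinj)
    exact Or.inr ⟨⟨hainj, (LinearMap.injective_iff_surjective_of_finrank_eq_finrank hdim).mp hainj⟩,
      ⟨hbinj, (LinearMap.injective_iff_surjective_of_finrank_eq_finrank hdim.symm).mp hbinj⟩, hdim⟩
  by_cases hK2 : LinearMap.ker f = ⊤ ∧ LinearMap.ker g = ⊤
  · exact Or.inl ⟨LinearMap.ker_eq_top.mp hK2.1, LinearMap.ker_eq_top.mp hK2.2⟩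
  by_cases hJ1 : LinearMap.range f = ⊥ ∧ LinearMap.range g = ⊥
  · exact Or.inl ⟨LinearMap.range_eq_bot.mp hJ1.1, LinearMap.range_eq_bot.mp hJ1.2⟩
  by_cases hJ2 : LinearMap.range f = ⊤ ∧ LinearMap.range g = ⊤
  · -- surjective case
    have hfsur : Function.Surjective f := LinearMap.range_eq_top.mp hJ2.1
    have hgsur : Function.Surjective g := LinearMap.range_eq_top.mp hJ2.2
    have hbsur : Function.Surjective b := fun x => by
      obtain ⟨y, hy⟩ := hfsur x; exact ⟨a y, hy⟩
    have hasur : Function.Surjective a := fun x => by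
      obtain ⟨y, hy⟩ := hgsur x; exact ⟨b y, hy⟩
    have hd1 : finrank ℂ V₀ ≤ finrank ℂ V₁ := by
      have h := LinearMap.finrank_range_le b
      rwa [LinearMap.range_eq_top.mpr hbsur, finrank_top] at h
    have hd2 : finrank ℂ V₁ ≤ finrank ℂ V₀ := by
      have h := LinearMap.finrank_range_le a
      rwa [LinearMap.range_eq_top.mpr hasur, finrank_top] at h
    have hdim : finrank ℂ V₀ = finrank ℂ V₁ := le_antisymm hd1 hd2
    exact Or.inr ⟨⟨(LinearMap.injective_iff_surjective_of_finrank_eq_finrank hdim).mpr hasur,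
        hasur⟩,
      ⟨(LinearMap.injective_iff_surjective_of_finrank_eq_finrank hdim.symm).mpr hbsur, hbsur⟩,
      hdim⟩
  · exfalso
    have hK := key _ _ hKsub hK1 hK2
    have hJ := key _ _ hJsub hJ1 hJ2
    have e0' : θ₀ * (finrank ℂ (LinearMap.range f) : ℝ)
        + θ₀ * (finrank ℂ (LinearMap.ker f) : ℝ) = θ₀ * (finrank ℂ V₀ : ℝ) := by
      rw [← mul_add, e0]
    have e1' : θ₁ * (finrank ℂ (LinearMap.range g) : ℝ)
        + θ₁ * (finrank ℂ (LinearMap.ker g) : ℝ) = θ₁ * (finrank ℂ V₁ : ℝ) := by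
      rw [← mul_add, e1]
    linarith
end

section
/- Let Θ = (θ_0, θ_1) ∈ ℝ² and let V = (V_0, V_1) be a nonzero finite-dimensional Θ-stable representation of (Q,I) with θ_0·dim V_0 + θ_1·dim V_1 = 0, and suppose a_i ∘ b_j = 0 and b_j ∘ a_i = 0 for all i, j ∈ {1,2}. If θ_0 ≥ 0 then b_1 = b_2 = 0, and if θ_1 ≥ 0 then a_1 = a_2 = 0. (Case (A) in the proof of the trichotomy lemma.) -/
open Module

variable {V₀ V₁ : Type*} [AddCommGroup V₀] [Module ℂ V₀] [AddCommGroup V₁] [Module ℂ V₁]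

private lemma slope_contra_aux (θ₀ θ₁ : ℝ) (n₀ n₁ k : ℕ) (hθ : 0 ≤ θ₀)
    (hn₀ : 0 < n₀) (hk : k < n₁)
    (hz : θ₀ * (n₀ : ℝ) + θ₁ * (n₁ : ℝ) = 0)
    (hlt : slopeMu θ₀ θ₁ n₀ k < slopeMu θ₀ θ₁ n₀ n₁) : False := by
  have hn₀' : (0 : ℝ) < (n₀ : ℝ) := by exact_mod_cast hn₀
  have hk' : (k : ℝ) < (n₁ : ℝ) := by exact_mod_cast hk
  have hk0 : (0 : ℝ) ≤ (k : ℝ) := Nat.cast_nonneg k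
  have hrhs : slopeMu θ₀ θ₁ n₀ n₁ = 0 := by
    unfold slopeMu; rw [hz]; exact zero_div _
  rw [hrhs] at hlt
  unfold slopeMu at hlt
  have hden : (0 : ℝ) < (n₀ : ℝ) + (k : ℝ) := by linarith
  have hnum : θ₀ * (n₀ : ℝ) + θ₁ * (k : ℝ) < 0 := by
    rcases div_neg_iff.mp hlt with ⟨_, h⟩ | ⟨h, _⟩
    · linarith
    · exact h
  have hθ1 : 0 < θ₁ := by nlinarith
  have hn₁' : (0 : ℝ) < (n₁ : ℝ) := lt_of_le_of_lt hk0 hk'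
  nlinarith [mul_nonneg hθ (le_of_lt hn₀'), mul_pos hθ1 hn₁']

private lemma slopeMu_comm (θ₀ θ₁ : ℝ) (n₀ n₁ : ℕ) :
    slopeMu θ₀ θ₁ n₀ n₁ = slopeMu θ₁ θ₀ n₁ n₀ := by
  unfold slopeMu; ring_nf

/-- Case (A) of the trichotomy lemma: if all compositions `aᵢ ∘ bⱼ` and
`bⱼ ∘ aᵢ` vanish, then `θ₀ ≥ 0` forces `b₁ = b₂ = 0` and `θ₁ ≥ 0` forces `a₁ = a₂ = 0`. -/
theorem caseA_of_theta_stable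
    [FiniteDimensional ℂ V₀] [FiniteDimensional ℂ V₁]
    (θ₀ θ₁ : ℝ) (a₁ a₂ : V₀ →ₗ[ℂ] V₁) (b₁ b₂ : V₁ →ₗ[ℂ] V₀)
    (c : V₀ →ₗ[ℂ] V₀) (d : V₁ →ₗ[ℂ] V₁)
    (hrel : SatisfiesRelations a₁ a₂ b₁ b₂ c d)
    (hne : 0 < finrank ℂ V₀ + finrank ℂ V₁)
    (hstab : IsThetaStable θ₀ θ₁ a₁ a₂ b₁ b₂ c d)
    (hzero : θ₀ * (finrank ℂ V₀ : ℝ) + θ₁ * (finrank ℂ V₁ : ℝ) = 0)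
    (hcomp : ∀ a : V₀ →ₗ[ℂ] V₁, ∀ b : V₁ →ₗ[ℂ] V₀,
      (a = a₁ ∨ a = a₂) → (b = b₁ ∨ b = b₂) → a ∘ₗ b = 0 ∧ b ∘ₗ a = 0) :
    (0 ≤ θ₀ → b₁ = 0 ∧ b₂ = 0) ∧ (0 ≤ θ₁ → a₁ = 0 ∧ a₂ = 0) := by

  obtain ⟨r1, r2, r3, r4, r5, r6, r7, r8⟩ := hrel
  have hb1a1 : b₁ ∘ₗ a₁ = 0 := (hcomp a₁ b₁ (Or.inl rfl) (Or.inl rfl)).2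
  have hb2a1 : b₂ ∘ₗ a₁ = 0 := (hcomp a₁ b₂ (Or.inl rfl) (Or.inr rfl)).2
  have hb1a2 : b₁ ∘ₗ a₂ = 0 := (hcomp a₂ b₁ (Or.inr rfl) (Or.inl rfl)).2
  have hb2a2 : b₂ ∘ₗ a₂ = 0 := (hcomp a₂ b₂ (Or.inr rfl) (Or.inr rfl)).2
  have ha1b1 : a₁ ∘ₗ b₁ = 0 := (hcomp a₁ b₁ (Or.inl rfl) (Or.inl rfl)).1
  have ha1b2 : a₁ ∘ₗ b₂ = 0 := (hcomp a₁ b₂ (Or.inl rfl) (Or.inr rfl)).1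
  have ha2b1 : a₂ ∘ₗ b₁ = 0 := (hcomp a₂ b₁ (Or.inr rfl) (Or.inl rfl)).1
  have ha2b2 : a₂ ∘ₗ b₂ = 0 := (hcomp a₂ b₂ (Or.inr rfl) (Or.inr rfl)).1
  constructor
  · -- θ₀ ≥ 0 case
    intro hθ0
    by_contra hb
    rw [not_and_or] at hb
    -- extract a nonzero b and a witness
    have hbne : ∃ y : V₁, b₁ y ≠ 0 ∨ b₂ y ≠ 0 := by
      rcases hb with h | h
      · obtain ⟨y, hy⟩ := DFunLike.ne_iff.mp h
        exact ⟨y, Or.inl hy⟩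
      · obtain ⟨y, hy⟩ := DFunLike.ne_iff.mp h
        exact ⟨y, Or.inr hy⟩
    obtain ⟨y, hy⟩ := hbne
    -- V₀ is nontrivial
    have hV₀ : Nontrivial V₀ := by
      rcases hy with hy | hy
      · exact nontrivial_of_ne _ _ hy
      · exact nontrivial_of_ne _ _ hy
    set K : Submodule ℂ V₁ := LinearMap.ker b₁ ⊓ LinearMap.ker b₂ with hK
    have hsub : IsSubrep a₁ a₂ b₁ b₂ c d ⊤ K := by
      refine ⟨fun x _ => ?_, fun x _ => ?_, fun y _ => trivial, fun y _ => trivial,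
        fun x _ => trivial, fun y hy => ?_⟩
      · exact ⟨LinearMap.congr_fun hb1a1 x, LinearMap.congr_fun hb2a1 x⟩
      · exact ⟨LinearMap.congr_fun hb1a2 x, LinearMap.congr_fun hb2a2 x⟩
      · obtain ⟨h1, h2⟩ := hy
        constructor
        · show b₁ (d y) = 0
          have := LinearMap.congr_fun r7 y
          simp only [LinearMap.comp_apply] at this
          rw [← this, h1, map_zero]
        · show b₂ (d y) = 0
          have := LinearMap.congr_fun r8 y
          simp only [LinearMap.comp_apply] at this
          rw [← this, h2, map_zero]
    have hKne : K ≠ ⊤ := by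
      intro h
      have hyK : y ∈ K := h ▸ Submodule.mem_top
      obtain ⟨h1, h2⟩ := hyK
      rcases hy with hy | hy
      · exact hy h1
      · exact hy h2
    have hlt := hstab ⊤ K hsub
      (by rintro ⟨h, -⟩; exact (bot_ne_top (α := Submodule ℂ V₀)) h.symm)
      (by rintro ⟨-, h⟩; exact hKne h)
    rw [finrank_top ℂ V₀] at hlt
    exact slope_contra_aux θ₀ θ₁ (finrank ℂ V₀) (finrank ℂ V₁) (finrank ℂ K) hθ0
      Module.finrank_pos (Submodule.finrank_lt hKne) hzero hlt
  · -- θ₁ ≥ 0 case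
    intro hθ1
    by_contra ha
    rw [not_and_or] at ha
    have hane : ∃ x : V₀, a₁ x ≠ 0 ∨ a₂ x ≠ 0 := by
      rcases ha with h | h
      · obtain ⟨x, hx⟩ := DFunLike.ne_iff.mp h
        exact ⟨x, Or.inl hx⟩
      · obtain ⟨x, hx⟩ := DFunLike.ne_iff.mp h
        exact ⟨x, Or.inr hx⟩
    obtain ⟨x, hx⟩ := hane
    have hV₁ : Nontrivial V₁ := by
      rcases hx with hx | hx
      · exact nontrivial_of_ne _ _ hx
      · exact nontrivial_of_ne _ _ hx
    set K : Submodule ℂ V₀ := LinearMap.ker a₁ ⊓ LinearMap.ker a₂ with hK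
    have hsub : IsSubrep a₁ a₂ b₁ b₂ c d K ⊤ := by
      refine ⟨fun x _ => trivial, fun x _ => trivial, fun y _ => ?_, fun y _ => ?_,
        fun x hx => ?_, fun y _ => trivial⟩
      · exact ⟨LinearMap.congr_fun ha1b1 y, LinearMap.congr_fun ha2b1 y⟩
      · exact ⟨LinearMap.congr_fun ha1b2 y, LinearMap.congr_fun ha2b2 y⟩
      · obtain ⟨h1, h2⟩ := hx
        constructor
        · show a₁ (c x) = 0
          have := LinearMap.congr_fun r5 x
          simp only [LinearMap.comp_apply] at this
          rw [← this, h1, map_zero]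
        · show a₂ (c x) = 0
          have := LinearMap.congr_fun r6 x
          simp only [LinearMap.comp_apply] at this
          rw [← this, h2, map_zero]
    have hKne : K ≠ ⊤ := by
      intro h
      have hxK : x ∈ K := h ▸ Submodule.mem_top
      obtain ⟨h1, h2⟩ := hxK
      rcases hx with hx | hx
      · exact hx h1
      · exact hx h2
    have hlt := hstab K ⊤ hsub
      (by rintro ⟨-, h⟩; exact (bot_ne_top (α := Submodule ℂ V₁)) h.symm)
      (by rintro ⟨h, -⟩; exact hKne h)
    rw [finrank_top ℂ V₁] at hlt
    rw [slopeMu_comm θ₀ θ₁ (finrank ℂ K) (finrank ℂ V₁),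
        slopeMu_comm θ₀ θ₁ (finrank ℂ V₀) (finrank ℂ V₁)] at hlt
    exact slope_contra_aux θ₁ θ₀ (finrank ℂ V₁) (finrank ℂ V₀) (finrank ℂ K) hθ1
      Module.finrank_pos (Submodule.finrank_lt hKne)
      (by linarith) hlt
end

section
/- Let Θ = (θ_0, θ_1) ∈ ℝ² and let V = (V_0, V_1) be a nonzero finite-dimensional Θ-stable representation of (Q,I) with θ_0·dim V_0 + θ_1·dim V_1 = 0, and suppose that a_1 : V_0 → V_1 and b_1 : V_1 → V_0 are both bijective. Then dim V_0 = dim V_1 = 1. (Case (B) in the proof of the trichotomy lemma; the proof uses that the operators b_1 a_1, b_2 a_1, b_1 a_2, b_2 a_2, c on V_0 pairwise commute and a common eigenvector generates a subrepresentation.) -/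
open Module

variable {V₀ V₁ : Type*} [AddCommGroup V₀] [Module ℂ V₀] [AddCommGroup V₁] [Module ℂ V₁]

lemma scalar_or_invariant {V : Type*} [AddCommGroup V] [Module ℂ V] [FiniteDimensional ℂ V]
    [Nontrivial V] (f : Module.End ℂ V) :
    (∃ W : Submodule ℂ V, W ≠ ⊥ ∧ W ≠ ⊤ ∧
      (∀ g : Module.End ℂ V, f ∘ₗ g = g ∘ₗ f → ∀ x ∈ W, g x ∈ W)) ∨
    (∃ μ : ℂ, ∀ x, f x = μ • x) := by
  obtain ⟨μ, hμ⟩ := Module.End.exists_eigenvalue f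
  by_cases hE : f.eigenspace μ = ⊤
  · right
    exact ⟨μ, fun x => Module.End.mem_eigenspace_iff.mp (hE ▸ Submodule.mem_top)⟩
  · left
    refine ⟨f.eigenspace μ, hμ, hE, ?_⟩
    intro g hg x hx
    rw [Module.End.mem_eigenspace_iff] at hx ⊢
    have := LinearMap.congr_fun hg x
    simp only [LinearMap.comp_apply] at this
    rw [this, hx, map_smul]

/-- Four pairwise commuting endomorphisms of a space of dimension `> 1` have a common
invariant subspace other than `⊥` and `⊤`. -/
lemma exists_common_invariant {V : Type*} [AddCommGroup V] [Module ℂ V] [FiniteDimensional ℂ V]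
    (hr : 1 < finrank ℂ V) (P S T c : Module.End ℂ V)
    (hPS : P ∘ₗ S = S ∘ₗ P) (hPT : P ∘ₗ T = T ∘ₗ P) (hPc : P ∘ₗ c = c ∘ₗ P)
    (hST : S ∘ₗ T = T ∘ₗ S) (hSc : S ∘ₗ c = c ∘ₗ S) (hTc : T ∘ₗ c = c ∘ₗ T) :
    ∃ W : Submodule ℂ V, W ≠ ⊥ ∧ W ≠ ⊤ ∧
      (∀ x ∈ W, P x ∈ W) ∧ (∀ x ∈ W, S x ∈ W) ∧ (∀ x ∈ W, T x ∈ W) ∧ (∀ x ∈ W, c x ∈ W) := by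
  haveI : Nontrivial V := Module.nontrivial_of_finrank_pos (R := ℂ) (by omega)
  rcases scalar_or_invariant P with ⟨W, h1, h2, h3⟩ | ⟨μP, hP⟩
  · exact ⟨W, h1, h2, h3 P rfl, h3 S hPS, h3 T hPT, h3 c hPc⟩
  rcases scalar_or_invariant S with ⟨W, h1, h2, h3⟩ | ⟨μS, hS⟩
  · exact ⟨W, h1, h2, fun x hx => hP x ▸ W.smul_mem _ hx, h3 S rfl, h3 T hST, h3 c hSc⟩
  rcases scalar_or_invariant T with ⟨W, h1, h2, h3⟩ | ⟨μT, hT⟩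
  · exact ⟨W, h1, h2, fun x hx => hP x ▸ W.smul_mem _ hx,
      fun x hx => hS x ▸ W.smul_mem _ hx, h3 T rfl, h3 c hTc⟩
  rcases scalar_or_invariant c with ⟨W, h1, h2, h3⟩ | ⟨μc, hc⟩
  · exact ⟨W, h1, h2, fun x hx => hP x ▸ W.smul_mem _ hx,
      fun x hx => hS x ▸ W.smul_mem _ hx, fun x hx => hT x ▸ W.smul_mem _ hx, h3 c rfl⟩
  obtain ⟨v, hv⟩ := exists_ne (0 : V)
  refine ⟨ℂ ∙ v, by simpa [Submodule.span_singleton_eq_bot] using hv, ?_,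
    fun x hx => hP x ▸ Submodule.smul_mem _ _ hx,
    fun x hx => hS x ▸ Submodule.smul_mem _ _ hx,
    fun x hx => hT x ▸ Submodule.smul_mem _ _ hx,
    fun x hx => hc x ▸ Submodule.smul_mem _ _ hx⟩
  intro htop
  have : finrank ℂ V = 1 := by
    rw [← finrank_top ℂ V, ← htop, finrank_span_singleton hv]
  omega


/-- Case (B) of the trichotomy lemma: if `a₁` and `b₁` are bijective,
then `dim V₀ = dim V₁ = 1`. -/
theorem caseB_of_theta_stable
    [FiniteDimensional ℂ V₀] [FiniteDimensional ℂ V₁]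
    (θ₀ θ₁ : ℝ) (a₁ a₂ : V₀ →ₗ[ℂ] V₁) (b₁ b₂ : V₁ →ₗ[ℂ] V₀)
    (c : V₀ →ₗ[ℂ] V₀) (d : V₁ →ₗ[ℂ] V₁)
    (hrel : SatisfiesRelations a₁ a₂ b₁ b₂ c d)
    (hne : 0 < finrank ℂ V₀ + finrank ℂ V₁)
    (hstab : IsThetaStable θ₀ θ₁ a₁ a₂ b₁ b₂ c d)
    (hzero : θ₀ * (finrank ℂ V₀ : ℝ) + θ₁ * (finrank ℂ V₁ : ℝ) = 0)
    (ha₁ : Function.Bijective a₁) (hb₁ : Function.Bijective b₁) :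
    finrank ℂ V₀ = 1 ∧ finrank ℂ V₁ = 1 := by
  obtain ⟨h1, h2, h3, h4, h5, h6, h7, h8⟩ := hrel
  set e : V₀ ≃ₗ[ℂ] V₁ := LinearEquiv.ofBijective a₁ ha₁ with he
  have hea : ∀ x : V₀, e x = a₁ x := fun x => rfl
  have hes : ∀ y : V₁, a₁ (e.symm y) = y := fun y => by rw [← hea, e.apply_symm_apply]
  have hes' : ∀ x : V₀, e.symm (a₁ x) = x := fun x => by rw [← hea, e.symm_apply_apply]
  -- equal dimensions
  have hdim : finrank ℂ V₁ = finrank ℂ V₀ := e.symm.finrank_eq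
  have hn : 0 < finrank ℂ V₀ := by omega
  -- θ₀ + θ₁ = 0
  have hθ : θ₀ + θ₁ = 0 := by
    rw [hdim] at hzero
    have : (θ₀ + θ₁) * (finrank ℂ V₀ : ℝ) = 0 := by linarith
    rcases mul_eq_zero.mp this with h | h
    · exact h
    · exfalso; have : (0 : ℝ) < (finrank ℂ V₀ : ℝ) := by exact_mod_cast hn
      linarith
  have hslope : ∀ k : ℕ, slopeMu θ₀ θ₁ k k = 0 := by
    intro k
    have : θ₀ * (k : ℝ) + θ₁ * (k : ℝ) = (θ₀ + θ₁) * k := by ring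
    rw [slopeMu, this, hθ, zero_mul, zero_div]
  -- suppose finrank V₀ > 1
  by_contra hcon
  have hr : 1 < finrank ℂ V₀ := by
    rcases Nat.lt_or_ge (finrank ℂ V₀) 2 with h | h
    · exact absurd ⟨by omega, by omega⟩ hcon
    · omega
  -- the commuting operators on V₀
  set P : Module.End ℂ V₀ := e.symm.toLinearMap ∘ₗ a₂ with hPdef
  set S : Module.End ℂ V₀ := b₁ ∘ₗ a₁ with hSdef
  set T : Module.End ℂ V₀ := b₂ ∘ₗ a₁ with hTdef
  have hPx : ∀ x, P x = e.symm (a₂ x) := fun x => rfl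
  have haP : ∀ x, a₁ (P x) = a₂ x := fun x => by rw [hPx, hes]
  have hdsymm : ∀ y : V₁, e.symm (d y) = c (e.symm y) := by
    intro y
    apply ha₁.injective
    rw [hes]
    have := LinearMap.congr_fun h5 (e.symm y)
    simp only [LinearMap.comp_apply] at this
    rw [← this, hes]
  have hPS : P ∘ₗ S = S ∘ₗ P := by
    ext x
    have := LinearMap.congr_fun h1 x
    simp only [LinearMap.comp_apply] at this ⊢
    rw [hPx, hPx, this, hes', hSdef]
    simp only [LinearMap.comp_apply, hes]
  have hPT : P ∘ₗ T = T ∘ₗ P := by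
    ext x
    have := LinearMap.congr_fun h2 x
    simp only [LinearMap.comp_apply] at this ⊢
    rw [hPx, hPx, this, hes', hTdef]
    simp only [LinearMap.comp_apply, hes]
  have hPc : P ∘ₗ c = c ∘ₗ P := by
    ext x
    have h6' := LinearMap.congr_fun h6 x
    simp only [LinearMap.comp_apply] at h6' ⊢
    rw [hPx, hPx, ← h6', hdsymm]
  have hST : S ∘ₗ T = T ∘ₗ S := by
    ext x
    have := LinearMap.congr_fun h3 (a₁ x)
    simp only [LinearMap.comp_apply] at this ⊢
    rw [hSdef, hTdef]
    simp only [LinearMap.comp_apply]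
    rw [this]
  have hcomm : ∀ (b : V₁ →ₗ[ℂ] V₀), c ∘ₗ b = b ∘ₗ d →
      (b ∘ₗ a₁) ∘ₗ c = c ∘ₗ (b ∘ₗ a₁) := by
    intro b hb
    ext x
    have hb' := LinearMap.congr_fun hb (a₁ x)
    have h5' := LinearMap.congr_fun h5 x
    simp only [LinearMap.comp_apply] at hb' h5' ⊢
    rw [hb', h5']
  have hSc : S ∘ₗ c = c ∘ₗ S := hcomm b₁ h7
  have hTc : T ∘ₗ c = c ∘ₗ T := hcomm b₂ h8
  obtain ⟨W, hWbot, hWtop, hWP, hWS, hWT, hWc⟩ :=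
    exists_common_invariant hr P S T c hPS hPT hPc hST hSc hTc
  set W₁ : Submodule ℂ V₁ := W.map a₁ with hW₁
  have hsub : IsSubrep a₁ a₂ b₁ b₂ c d W W₁ := by
    refine ⟨fun x hx => Submodule.mem_map_of_mem hx, ?_, ?_, ?_, hWc, ?_⟩
    · intro x hx
      exact ⟨P x, hWP x hx, haP x⟩
    · rintro y ⟨x, hx, rfl⟩
      exact hWS x hx
    · rintro y ⟨x, hx, rfl⟩
      exact hWT x hx
    · rintro y ⟨x, hx, rfl⟩
      have h5' := LinearMap.congr_fun h5 x
      simp only [LinearMap.comp_apply] at h5'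
      rw [h5']
      exact Submodule.mem_map_of_mem (hWc x hx)
  have hdimW : finrank ℂ W₁ = finrank ℂ W :=
    (Submodule.equivMapOfInjective a₁ ha₁.injective W).symm.finrank_eq
  have := hstab W W₁ hsub (fun h => hWbot h.1) (fun h => hWtop h.1)
  rw [hdimW, hslope, hdim, hslope] at this
  exact lt_irrefl 0 this
end

section
/- Suppose θ_1 < 0 and let Ṽ = (V_0, V_1, ℂ) be a Θ-stable framed representation of (Q̃,I) such that ι : ℂ → V_0 is an isomorphism (so dim V_0 = 1). Then V_1 = Im(a_1) + Im(a_2); in particular dim V_1 ≤ 2. Moreover θ_0 + θ_1·dim V_1 < 0; in particular if dim V_1 = 2 then θ_0 + 2θ_1 < 0. (Case 2 of the classification of Θ-stable framed representations with dim V_0 = 1; uses that (V_0, Im a_1 + Im a_2, ℂ) is a framed subrepresentation by the relation d a_i = a_i c.) -/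
open Module

variable {V₀ V₁ : Type*} [AddCommGroup V₀] [Module ℂ V₀] [AddCommGroup V₁] [Module ℂ V₁]

/-- `Θ`-stability for a framed representation `(V₀, V₁, V_∞ = ℂ)` of `(Q̃, I)` with framing
map `ι : ℂ → V₀`:
(i) every framed subrepresentation `(W₀, W₁, 0)` with `(W₀, W₁) ≠ (0, 0)` satisfies
`Θ(W₀, W₁) < 0`, and
(ii) every framed subrepresentation `(W₀, W₁, ℂ)` with `(W₀, W₁) ≠ (V₀, V₁)` satisfies
`Θ(W₀, W₁) < Θ(V₀, V₁)`. -/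
def IsFramedStable [FiniteDimensional ℂ V₀] [FiniteDimensional ℂ V₁]
    (θ₀ θ₁ : ℝ) (a₁ a₂ : V₀ →ₗ[ℂ] V₁) (b₁ b₂ : V₁ →ₗ[ℂ] V₀)
    (c : V₀ →ₗ[ℂ] V₀) (d : V₁ →ₗ[ℂ] V₁) (ι : ℂ →ₗ[ℂ] V₀) : Prop :=
  (∀ W₀ : Submodule ℂ V₀, ∀ W₁ : Submodule ℂ V₁,
      IsSubrep a₁ a₂ b₁ b₂ c d W₀ W₁ → ¬(W₀ = ⊥ ∧ W₁ = ⊥) →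
      θ₀ * (finrank ℂ W₀ : ℝ) + θ₁ * (finrank ℂ W₁ : ℝ) < 0) ∧
    (∀ W₀ : Submodule ℂ V₀, ∀ W₁ : Submodule ℂ V₁,
      IsSubrep a₁ a₂ b₁ b₂ c d W₀ W₁ → LinearMap.range ι ≤ W₀ →
      ¬(W₀ = ⊤ ∧ W₁ = ⊤) →
      θ₀ * (finrank ℂ W₀ : ℝ) + θ₁ * (finrank ℂ W₁ : ℝ) <
        θ₀ * (finrank ℂ V₀ : ℝ) + θ₁ * (finrank ℂ V₁ : ℝ))

/-- if `θ₁ < 0` and `(V₀, V₁, ℂ)` is a `Θ`-stable framed representation with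
`ι : ℂ → V₀` an isomorphism, then `V₁ = Im(a₁) + Im(a₂)`, so `dim V₁ ≤ 2`; moreover
`θ₀ + θ₁·dim V₁ < 0` (in particular `dim V₁ = 2` forces `θ₀ + 2θ₁ < 0`). -/
theorem case_theta1_neg
    [FiniteDimensional ℂ V₀] [FiniteDimensional ℂ V₁]
    (θ₀ θ₁ : ℝ) (hθ₁ : θ₁ < 0)
    (a₁ a₂ : V₀ →ₗ[ℂ] V₁) (b₁ b₂ : V₁ →ₗ[ℂ] V₀)
    (c : V₀ →ₗ[ℂ] V₀) (d : V₁ →ₗ[ℂ] V₁) (ι : ℂ →ₗ[ℂ] V₀)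
    (hrel : SatisfiesRelations a₁ a₂ b₁ b₂ c d)
    (hι : Function.Bijective ι)
    (hstab : IsFramedStable θ₀ θ₁ a₁ a₂ b₁ b₂ c d ι) :
    LinearMap.range a₁ ⊔ LinearMap.range a₂ = (⊤ : Submodule ℂ V₁) ∧
      finrank ℂ V₁ ≤ 2 ∧
      θ₀ + θ₁ * (finrank ℂ V₁ : ℝ) < 0 := by
  obtain ⟨h1, h2⟩ := hstab
  have hV0 : finrank ℂ V₀ = 1 := by
    rw [← (LinearEquiv.ofBijective ι hι).finrank_eq, finrank_self]
  set W₁ : Submodule ℂ V₁ := LinearMap.range a₁ ⊔ LinearMap.range a₂ with hW₁def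
  have hda1 : ∀ x, d (a₁ x) = a₁ (c x) := fun x =>
    congrFun (congrArg (fun f => f.toFun) hrel.2.2.2.2.1) x
  have hda2 : ∀ x, d (a₂ x) = a₂ (c x) := fun x =>
    congrFun (congrArg (fun f => f.toFun) hrel.2.2.2.2.2.1) x
  have hsub : IsSubrep a₁ a₂ b₁ b₂ c d ⊤ W₁ := by
    refine ⟨fun x _ => Submodule.mem_sup_left ⟨x, rfl⟩,
      fun x _ => Submodule.mem_sup_right ⟨x, rfl⟩,
      fun y _ => Submodule.mem_top, fun y _ => Submodule.mem_top,
      fun x _ => Submodule.mem_top, ?_⟩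
    intro y hy
    rw [Submodule.mem_sup] at hy
    obtain ⟨y₁, ⟨u, rfl⟩, y₂, ⟨v, rfl⟩, rfl⟩ := hy
    rw [map_add, hda1, hda2]
    exact Submodule.add_mem _ (Submodule.mem_sup_left ⟨c u, rfl⟩)
      (Submodule.mem_sup_right ⟨c v, rfl⟩)
  have hW₁top : W₁ = ⊤ := by
    by_contra hne
    have := h2 ⊤ W₁ hsub le_top (fun h => hne h.2)
    rw [finrank_top] at this
    have hle : finrank ℂ W₁ ≤ finrank ℂ V₁ := Submodule.finrank_le W₁
    have : θ₁ * (finrank ℂ V₁ : ℝ) ≤ θ₁ * (finrank ℂ W₁ : ℝ) := by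
      apply mul_le_mul_of_nonpos_left _ hθ₁.le
      exact_mod_cast hle
    linarith
  have hdim : finrank ℂ V₁ ≤ 2 := by
    have h1' : finrank ℂ V₁ = finrank ℂ W₁ := by rw [hW₁top, finrank_top]
    have hsum : finrank ℂ W₁ ≤ finrank ℂ (LinearMap.range a₁) +
        finrank ℂ (LinearMap.range a₂) := by
      have := Submodule.finrank_sup_add_finrank_inf_eq (LinearMap.range a₁) (LinearMap.range a₂)
      rw [← hW₁def] at this
      omega
    have hr1 : finrank ℂ (LinearMap.range a₁) ≤ 1 := hV0 ▸ LinearMap.finrank_range_le a₁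
    have hr2 : finrank ℂ (LinearMap.range a₂) ≤ 1 := hV0 ▸ LinearMap.finrank_range_le a₂
    omega
  refine ⟨hW₁top, hdim, ?_⟩
  have hsubtop : IsSubrep a₁ a₂ b₁ b₂ c d ⊤ (⊤ : Submodule ℂ V₁) :=
    ⟨fun _ _ => Submodule.mem_top, fun _ _ => Submodule.mem_top,
      fun _ _ => Submodule.mem_top, fun _ _ => Submodule.mem_top,
      fun _ _ => Submodule.mem_top, fun _ _ => Submodule.mem_top⟩
  have hne : ¬((⊤ : Submodule ℂ V₀) = ⊥ ∧ (⊤ : Submodule ℂ V₁) = ⊥) := by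
    rintro ⟨h, -⟩
    have : finrank ℂ (⊤ : Submodule ℂ V₀) = 0 := by rw [h, finrank_bot]
    rw [finrank_top, hV0] at this
    exact one_ne_zero this
  have := h1 ⊤ ⊤ hsubtop hne
  rw [finrank_top, finrank_top, hV0] at this
  push_cast at this
  linarith
end

section
/- (Classification in chamber I.) Suppose θ_0 < 0, θ_1 > 0 and θ_0 + 2θ_1 > 0. Let Ṽ = (V_0, V_1, ℂ) be a framed representation of (Q̃,I) such that ι : ℂ → V_0 is an isomorphism and dim V_1 ≠ 1. Then Ṽ is Θ-stable if and only if V_1 = 0. -/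
open Module

variable {V₀ V₁ : Type*} [AddCommGroup V₀] [Module ℂ V₀] [AddCommGroup V₁] [Module ℂ V₁]

/-- Classification in chamber I: if `θ₀ < 0`, `θ₁ > 0`, `θ₀ + 2θ₁ > 0`,
`ι : ℂ → V₀` is an isomorphism and `dim V₁ ≠ 1`, then the framed representation is
`Θ`-stable iff `V₁ = 0`. -/
theorem classification_chamber_I
    [FiniteDimensional ℂ V₀] [FiniteDimensional ℂ V₁]
    (θ₀ θ₁ : ℝ) (hθ₀ : θ₀ < 0) (hθ₁ : 0 < θ₁) (hc : 0 < θ₀ + 2 * θ₁)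
    (a₁ a₂ : V₀ →ₗ[ℂ] V₁) (b₁ b₂ : V₁ →ₗ[ℂ] V₀)
    (c : V₀ →ₗ[ℂ] V₀) (d : V₁ →ₗ[ℂ] V₁) (ι : ℂ →ₗ[ℂ] V₀)
    (hrel : SatisfiesRelations a₁ a₂ b₁ b₂ c d)
    (hι : Function.Bijective ι)
    (hd1 : finrank ℂ V₁ ≠ 1) :
    IsFramedStable θ₀ θ₁ a₁ a₂ b₁ b₂ c d ι ↔ finrank ℂ V₁ = 0 := by
  have h0 : finrank ℂ V₀ = 1 := by
    rw [← (LinearEquiv.ofBijective ι hι).finrank_eq]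
    exact finrank_self ℂ
  constructor
  · intro hs
    by_contra hn
    have hn2 : 2 ≤ finrank ℂ V₁ := by omega
    have hsub : IsSubrep a₁ a₂ b₁ b₂ c d (⊤ : Submodule ℂ V₀) (⊤ : Submodule ℂ V₁) :=
      ⟨fun _ _ => trivial, fun _ _ => trivial, fun _ _ => trivial,
        fun _ _ => trivial, fun _ _ => trivial, fun _ _ => trivial⟩
    have hkey := hs.1 ⊤ ⊤ hsub (by
      rintro ⟨h, -⟩
      have h1 : finrank ℂ (⊤ : Submodule ℂ V₀) = 1 := by rw [finrank_top]; exact h0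
      rw [h, finrank_bot] at h1
      exact one_ne_zero h1.symm)
    rw [finrank_top, finrank_top, h0] at hkey
    have : (2 : ℝ) ≤ (finrank ℂ V₁ : ℝ) := by exact_mod_cast hn2
    push_cast at hkey
    nlinarith
  · intro h1
    have hss : Subsingleton V₁ := Module.finrank_zero_iff.mp h1
    constructor
    · intro W₀ W₁ _ hne
      have hW₁b : W₁ = ⊥ := Subsingleton.elim _ _
      have hW₀ : W₀ ≠ ⊥ := fun h => hne ⟨h, hW₁b⟩
      have hW₀1 : finrank ℂ W₀ = 1 := by
        refine le_antisymm (h0 ▸ Submodule.finrank_le W₀) ?_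
        exact Nat.one_le_iff_ne_zero.mpr fun h => hW₀ (Submodule.finrank_eq_zero.mp h)
      have hW₁0 : finrank ℂ W₁ = 0 := by rw [hW₁b, finrank_bot]
      rw [hW₀1, hW₁0]
      simpa using hθ₀
    · intro W₀ W₁ _ hrange hne
      have hW₀ : W₀ = ⊤ := eq_top_iff.mpr (LinearMap.range_eq_top.mpr hι.2 ▸ hrange)
      have hW₁ : W₁ = ⊤ := Subsingleton.elim _ _
      exact absurd ⟨hW₀, hW₁⟩ hne
end

section
/- (Classification in chamber II.) Suppose θ_0 < 0, θ_1 > 0 and θ_0 + 2θ_1 < 0. Let Ṽ = (V_0, V_1, ℂ) be a framed representation of (Q̃,I) such that ι : ℂ → V_0 is an isomorphism and dim V_1 ≠ 1. Then Ṽ is Θ-stable if and only if either V_1 = 0, or dim V_1 = 2 with a_1 = a_2 = 0 and Ker(b_1) ∩ Ker(b_2) = 0. -/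
open Module

variable {V₀ V₁ : Type*} [AddCommGroup V₀] [Module ℂ V₀] [AddCommGroup V₁] [Module ℂ V₁]

/-- Classification in chamber II: if `θ₀ < 0`, `θ₁ > 0`, `θ₀ + 2θ₁ < 0`,
`ι : ℂ → V₀` is an isomorphism and `dim V₁ ≠ 1`, then the framed representation is
`Θ`-stable iff either `V₁ = 0`, or `dim V₁ = 2` with `a₁ = a₂ = 0` and
`Ker(b₁) ∩ Ker(b₂) = 0`. -/
theorem classification_chamber_II
    [FiniteDimensional ℂ V₀] [FiniteDimensional ℂ V₁]
    (θ₀ θ₁ : ℝ) (hθ₀ : θ₀ < 0) (hθ₁ : 0 < θ₁) (hc : θ₀ + 2 * θ₁ < 0)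
    (a₁ a₂ : V₀ →ₗ[ℂ] V₁) (b₁ b₂ : V₁ →ₗ[ℂ] V₀)
    (c : V₀ →ₗ[ℂ] V₀) (d : V₁ →ₗ[ℂ] V₁) (ι : ℂ →ₗ[ℂ] V₀)
    (hrel : SatisfiesRelations a₁ a₂ b₁ b₂ c d)
    (hι : Function.Bijective ι)
    (hd1 : finrank ℂ V₁ ≠ 1) :
    IsFramedStable θ₀ θ₁ a₁ a₂ b₁ b₂ c d ι ↔
      (finrank ℂ V₁ = 0 ∨
        (finrank ℂ V₁ = 2 ∧ a₁ = 0 ∧ a₂ = 0 ∧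
          LinearMap.ker b₁ ⊓ LinearMap.ker b₂ = ⊥)) := by
  obtain ⟨r1, r2, r3, r4, r5, r6, r7, r8⟩ := hrel
  have hV0 : finrank ℂ V₀ = 1 := by
    rw [← (LinearEquiv.ofBijective ι hι).finrank_eq, finrank_self]
  have hrange : LinearMap.range ι = ⊤ := LinearMap.range_eq_top.mpr hι.2
  have hW0rank : ∀ W₀ : Submodule ℂ V₀, W₀ ≠ ⊥ → finrank ℂ W₀ = 1 := by
    intro W₀ h
    have h1 : finrank ℂ W₀ ≤ 1 := hV0 ▸ Submodule.finrank_le W₀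
    have h2 : finrank ℂ W₀ ≠ 0 := fun h0 => h (Submodule.finrank_eq_zero.mp h0)
    omega
  constructor
  · rintro ⟨h1, _⟩
    -- the kernel intersection is a subrepresentation with W₀ = ⊥
    have hsubK : IsSubrep a₁ a₂ b₁ b₂ c d ⊥ (LinearMap.ker b₁ ⊓ LinearMap.ker b₂) := by
      refine ⟨fun x hx => ?_, fun x hx => ?_, fun y hy => ?_, fun y hy => ?_,
        fun x hx => ?_, fun y hy => ?_⟩
      · rw [Submodule.mem_bot] at hx; simp [hx]
      · rw [Submodule.mem_bot] at hx; simp [hx]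
      · rw [Submodule.mem_bot]; exact (Submodule.mem_inf.mp hy).1
      · rw [Submodule.mem_bot]; exact (Submodule.mem_inf.mp hy).2
      · rw [Submodule.mem_bot] at hx; simp [hx]
      · obtain ⟨hy1, hy2⟩ := Submodule.mem_inf.mp hy
        rw [LinearMap.mem_ker] at hy1 hy2
        have e1 := LinearMap.congr_fun r7 y
        have e2 := LinearMap.congr_fun r8 y
        simp only [LinearMap.comp_apply] at e1 e2
        refine Submodule.mem_inf.mpr ⟨?_, ?_⟩
        · rw [LinearMap.mem_ker, ← e1, hy1, map_zero]
        · rw [LinearMap.mem_ker, ← e2, hy2, map_zero]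
    have hKbot : LinearMap.ker b₁ ⊓ LinearMap.ker b₂ = ⊥ := by
      by_contra h
      have hlt := h1 ⊥ (LinearMap.ker b₁ ⊓ LinearMap.ker b₂) hsubK (by tauto)
      have hpos : finrank ℂ (LinearMap.ker b₁ ⊓ LinearMap.ker b₂ : Submodule ℂ V₁) ≠ 0 :=
        fun h0 => h (Submodule.finrank_eq_zero.mp h0)
      have hpos' : (1 : ℝ) ≤
          (finrank ℂ (LinearMap.ker b₁ ⊓ LinearMap.ker b₂ : Submodule ℂ V₁) : ℝ) := by
        exact_mod_cast Nat.one_le_iff_ne_zero.mpr hpos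
      rw [finrank_bot] at hlt
      push_cast at hlt
      have h5 : θ₁ * 1 ≤ θ₁ * (finrank ℂ (LinearMap.ker b₁ ⊓ LinearMap.ker b₂ : Submodule ℂ V₁) : ℝ) :=
        mul_le_mul_of_nonneg_left hpos' hθ₁.le
      linarith
    have hinj : Function.Injective (b₁.prod b₂) := by
      rw [← LinearMap.ker_eq_bot, LinearMap.ker_prod]; exact hKbot
    have hle : finrank ℂ V₁ ≤ 2 := by
      have h2 := LinearMap.finrank_le_finrank_of_injective hinj
      rwa [Module.finrank_prod, hV0] at h2
    rcases eq_or_ne (finrank ℂ V₁) 0 with h0 | h0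
    · exact Or.inl h0
    · have h2d : finrank ℂ V₁ = 2 := by omega
      have hsurj : Function.Surjective (b₁.prod b₂) := by
        refine (LinearMap.injective_iff_surjective_of_finrank_eq_finrank ?_).mp hinj
        rw [Module.finrank_prod, hV0, h2d]
      have key : ∀ a : V₀ →ₗ[ℂ] V₁, b₂ ∘ₗ a ∘ₗ b₁ = b₁ ∘ₗ a ∘ₗ b₂ → a = 0 := by
        intro a hr
        ext x
        obtain ⟨y, hy⟩ := hsurj (x, 0)
        obtain ⟨y', hy'⟩ := hsurj (0, x)
        simp only [LinearMap.prod_apply, Function.prod, Prod.mk.injEq] at hy hy'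
        have e := LinearMap.congr_fun hr y
        have e' := LinearMap.congr_fun hr y'
        simp only [LinearMap.comp_apply, hy.1, hy.2, hy'.1, hy'.2, map_zero] at e e'
        have hmem : a x ∈ LinearMap.ker b₁ ⊓ LinearMap.ker b₂ :=
          Submodule.mem_inf.mpr ⟨LinearMap.mem_ker.mpr e'.symm, LinearMap.mem_ker.mpr e⟩
        rw [hKbot, Submodule.mem_bot] at hmem
        simpa using hmem
      exact Or.inr ⟨h2d, key a₁ r3, key a₂ r4, hKbot⟩
  · rintro (h0 | ⟨h2d, ha1, ha2, hK⟩)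
    · have hsing : Subsingleton V₁ := finrank_zero_iff.mp h0
      have hW1 : ∀ W₁ : Submodule ℂ V₁, W₁ = ⊥ := fun W₁ => Subsingleton.elim _ _
      constructor
      · intro W₀ W₁ hsub hne
        have hb : W₁ = ⊥ := hW1 W₁
        have hW0 : W₀ ≠ ⊥ := fun h => hne ⟨h, hb⟩
        rw [hW0rank W₀ hW0, hb, finrank_bot]
        push_cast
        linarith
      · intro W₀ W₁ hsub hι' hne
        exact absurd ⟨top_le_iff.mp (hrange ▸ hι'), (hW1 W₁).trans (Subsingleton.elim _ _)⟩ hne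
    · constructor
      · intro W₀ W₁ hsub hne
        rcases eq_or_ne W₀ ⊥ with hb | hb
        · have hle : W₁ ≤ LinearMap.ker b₁ ⊓ LinearMap.ker b₂ := by
            refine fun y hy => Submodule.mem_inf.mpr ⟨?_, ?_⟩
            · have := hsub.2.2.1 y hy
              rw [hb, Submodule.mem_bot] at this
              exact LinearMap.mem_ker.mpr this
            · have := hsub.2.2.2.1 y hy
              rw [hb, Submodule.mem_bot] at this
              exact LinearMap.mem_ker.mpr this
          have hW1 : W₁ = ⊥ := le_bot_iff.mp (hK ▸ hle)
          exact absurd ⟨hb, hW1⟩ hne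
        · have hr0 := hW0rank W₀ hb
          have hr1 : finrank ℂ W₁ ≤ 2 := h2d ▸ Submodule.finrank_le W₁
          have hr1' : (finrank ℂ W₁ : ℝ) ≤ 2 := by exact_mod_cast hr1
          have h5 : θ₁ * (finrank ℂ W₁ : ℝ) ≤ θ₁ * 2 :=
            mul_le_mul_of_nonneg_left hr1' hθ₁.le
          rw [hr0]
          push_cast
          linarith
      · intro W₀ W₁ hsub hι' hne
        have hW0 : W₀ = ⊤ := top_le_iff.mp (hrange ▸ hι')
        have hW1 : W₁ ≠ ⊤ := fun h => hne ⟨hW0, h⟩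
        have hlt : finrank ℂ W₁ < finrank ℂ V₁ :=
          Submodule.finrank_lt hW1
        have hlt' : (finrank ℂ W₁ : ℝ) < (finrank ℂ V₁ : ℝ) := by exact_mod_cast hlt
        have h5 : θ₁ * (finrank ℂ W₁ : ℝ) < θ₁ * (finrank ℂ V₁ : ℝ) :=
          mul_lt_mul_of_pos_left hlt' hθ₁
        rw [hW0, finrank_top]
        linarith
end

section
/- (Classification in chamber III.) Suppose θ_0 < 0 and θ_1 < 0. Let Ṽ = (V_0, V_1, ℂ) be a framed representation of (Q̃,I) such that ι : ℂ → V_0 is an isomorphism and dim V_1 ≠ 1. Then Ṽ is Θ-stable if and only if either V_1 = 0, or dim V_1 = 2 and the map (a_1, a_2) : V_0 ⊕ V_0 → V_1 is bijective. -/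
open Module

variable {V₀ V₁ : Type*} [AddCommGroup V₀] [Module ℂ V₀] [AddCommGroup V₁] [Module ℂ V₁]

/-- Classification in chamber III: if `θ₀ < 0`, `θ₁ < 0`,
`ι : ℂ → V₀` is an isomorphism and `dim V₁ ≠ 1`, then the framed representation is
`Θ`-stable iff either `V₁ = 0`, or `dim V₁ = 2` and `(a₁, a₂) : V₀ ⊕ V₀ → V₁` is
bijective. -/
theorem classification_chamber_III
    [FiniteDimensional ℂ V₀] [FiniteDimensional ℂ V₁]
    (θ₀ θ₁ : ℝ) (hθ₀ : θ₀ < 0) (hθ₁ : θ₁ < 0)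
    (a₁ a₂ : V₀ →ₗ[ℂ] V₁) (b₁ b₂ : V₁ →ₗ[ℂ] V₀)
    (c : V₀ →ₗ[ℂ] V₀) (d : V₁ →ₗ[ℂ] V₁) (ι : ℂ →ₗ[ℂ] V₀)
    (hrel : SatisfiesRelations a₁ a₂ b₁ b₂ c d)
    (hι : Function.Bijective ι)
    (hd1 : finrank ℂ V₁ ≠ 1) :
    IsFramedStable θ₀ θ₁ a₁ a₂ b₁ b₂ c d ι ↔
      (finrank ℂ V₁ = 0 ∨
        (finrank ℂ V₁ = 2 ∧ Function.Bijective ⇑(LinearMap.coprod a₁ a₂))) := by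
  have hV0 : finrank ℂ V₀ = 1 := by
    rw [← (LinearEquiv.ofBijective ι hι).finrank_eq]
    exact Module.finrank_self ℂ
  have hιtop : LinearMap.range ι = ⊤ := LinearMap.range_eq_top.mpr hι.2
  constructor
  · intro h
    by_cases h0 : finrank ℂ V₁ = 0
    · exact Or.inl h0
    right
    set W₁ : Submodule ℂ V₁ := LinearMap.range a₁ ⊔ LinearMap.range a₂ with hW₁def
    have hsub : IsSubrep a₁ a₂ b₁ b₂ c d ⊤ W₁ := by
      refine ⟨fun x _ => Submodule.mem_sup_left (LinearMap.mem_range_self a₁ x),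
        fun x _ => Submodule.mem_sup_right (LinearMap.mem_range_self a₂ x),
        fun y _ => Submodule.mem_top, fun y _ => Submodule.mem_top,
        fun x _ => Submodule.mem_top, ?_⟩
      intro y hy
      obtain ⟨u, hu, v, hv, rfl⟩ := Submodule.mem_sup.mp hy
      obtain ⟨p, rfl⟩ := hu
      obtain ⟨q, rfl⟩ := hv
      rw [map_add]
      refine Submodule.add_mem _ (Submodule.mem_sup_left ?_) (Submodule.mem_sup_right ?_)
      · have := LinearMap.congr_fun hrel.2.2.2.2.1 p
        simp only [LinearMap.comp_apply] at this
        rw [this]; exact LinearMap.mem_range_self a₁ (c p)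
      · have := LinearMap.congr_fun hrel.2.2.2.2.2.1 q
        simp only [LinearMap.comp_apply] at this
        rw [this]; exact LinearMap.mem_range_self a₂ (c q)
    have hWtop : W₁ = ⊤ := by
      by_contra hne
      have hineq := h.2 ⊤ W₁ hsub le_top (fun hc => hne hc.2)
      rw [finrank_top] at hineq
      have hle : finrank ℂ W₁ ≤ finrank ℂ V₁ := Submodule.finrank_le W₁
      have hle' : (finrank ℂ W₁ : ℝ) ≤ (finrank ℂ V₁ : ℝ) := Nat.cast_le.mpr hle
      nlinarith [mul_le_mul_of_nonpos_left hle' (le_of_lt hθ₁)]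
    have hsurj : Function.Surjective ⇑(LinearMap.coprod a₁ a₂) := by
      rw [← LinearMap.range_eq_top, LinearMap.range_coprod]
      exact hWtop
    have hle2 : finrank ℂ V₁ ≤ 2 := by
      have h1 := LinearMap.finrank_range_le (a₁.coprod a₂)
      rw [LinearMap.range_coprod, ← hW₁def, hWtop, finrank_top, Module.finrank_prod, hV0] at h1
      exact h1
    have hn2 : finrank ℂ V₁ = 2 := by omega
    refine ⟨hn2, ?_, hsurj⟩
    exact (LinearMap.injective_iff_surjective_of_finrank_eq_finrank
      (by rw [Module.finrank_prod, hV0, hn2])).mpr hsurj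
  · intro h
    constructor
    · intro W₀ W₁ hsub hne
      have h0 : (0:ℝ) ≤ (finrank ℂ W₀ : ℝ) := Nat.cast_nonneg _
      have h1 : (0:ℝ) ≤ (finrank ℂ W₁ : ℝ) := Nat.cast_nonneg _
      rcases not_and_or.mp hne with hb | hb
      · have : 0 < finrank ℂ W₀ := by
          rcases Nat.eq_zero_or_pos (finrank ℂ W₀) with hz | hp
          · exact absurd (Submodule.finrank_eq_zero.mp hz) hb
          · exact hp
        have : (1:ℝ) ≤ (finrank ℂ W₀ : ℝ) := by exact_mod_cast this
        nlinarith
      · have : 0 < finrank ℂ W₁ := by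
          rcases Nat.eq_zero_or_pos (finrank ℂ W₁) with hz | hp
          · exact absurd (Submodule.finrank_eq_zero.mp hz) hb
          · exact hp
        have : (1:ℝ) ≤ (finrank ℂ W₁ : ℝ) := by exact_mod_cast this
        nlinarith
    · intro W₀ W₁ hsub hrange hne
      have hW0 : W₀ = ⊤ := top_le_iff.mp (hιtop ▸ hrange)
      rcases h with h0 | ⟨h2, hbij⟩
      · have : Subsingleton V₁ := Module.finrank_zero_iff.mp h0
        have hW1 : W₁ = ⊤ := Subsingleton.elim _ _
        exact absurd ⟨hW0, hW1⟩ hne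
      · have hW1 : W₁ = ⊤ := by
          rw [eq_top_iff]
          intro y _
          obtain ⟨⟨x1, x2⟩, rfl⟩ := hbij.2 y
          have : (a₁.coprod a₂) (x1, x2) = a₁ x1 + a₂ x2 := rfl
          rw [this]
          exact Submodule.add_mem _ (hsub.1 x1 (by rw [hW0]; trivial))
            (hsub.2.1 x2 (by rw [hW0]; trivial))
        exact absurd ⟨hW0, hW1⟩ hne
end

section
/- (Classification in chamber IV.) Suppose θ_0 > 0, θ_1 < 0 and θ_0 + 2θ_1 < 0. Let Ṽ = (V_0, V_1, ℂ) be a framed representation of (Q̃,I) such that ι : ℂ → V_0 is an isomorphism and dim V_1 ≠ 1. Then Ṽ is Θ-stable if and only if dim V_1 = 2 and the map (a_1, a_2) : V_0 ⊕ V_0 → V_1 is bijective. Moreover, in this case the relations of (Q,I) force b_1 = b_2 = 0. -/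
open Module

variable {V₀ V₁ : Type*} [AddCommGroup V₀] [Module ℂ V₀] [AddCommGroup V₁] [Module ℂ V₁]

private lemma b_eq_zero_aux (a₁ a₂ : V₀ →ₗ[ℂ] V₁) (b : V₁ →ₗ[ℂ] V₀) (ι : ℂ →ₗ[ℂ] V₀)
    (hι : Function.Bijective ι)
    (hbij : Function.Bijective ⇑(LinearMap.coprod a₁ a₂))
    (h : a₂ ∘ₗ b ∘ₗ a₁ = a₁ ∘ₗ b ∘ₗ a₂) : b = 0 := by
  set x₀ := ι 1 with hx₀def
  have hx₀ : x₀ ≠ 0 := by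
    intro h0
    have h1 : (1 : ℂ) = 0 := hι.1 (by simpa [hx₀def] using h0)
    norm_num at h1
  have hsmul : ∀ s : ℂ, ι s = s • x₀ := by
    intro s; rw [hx₀def, ← map_smul, smul_eq_mul, mul_one]
  have key : ∀ μ₁ μ₂ : ℂ, μ₁ • a₂ x₀ = μ₂ • a₁ x₀ → μ₁ = 0 ∧ μ₂ = 0 := by
    intro μ₁ μ₂ hμ
    have hz : (LinearMap.coprod a₁ a₂) (μ₂ • x₀, -μ₁ • x₀) = 0 := by
      rw [LinearMap.coprod_apply, map_smul, map_smul, neg_smul, ← hμ]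
      abel
    have hz0 : (LinearMap.coprod a₁ a₂) (μ₂ • x₀, -μ₁ • x₀)
        = (LinearMap.coprod a₁ a₂) (0, 0) := by
      rw [hz]; simp
    have hp : ((μ₂ • x₀, -μ₁ • x₀) : V₀ × V₀) = (0, 0) := hbij.1 hz0
    have h2 : μ₂ • x₀ = 0 := congrArg Prod.fst hp
    have h1 : -μ₁ • x₀ = 0 := congrArg Prod.snd hp
    constructor
    · have := (smul_eq_zero.1 h1).resolve_right hx₀
      simpa using this
    · exact (smul_eq_zero.1 h2).resolve_right hx₀
  obtain ⟨s₁, hs₁⟩ := hι.2 (b (a₁ x₀))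
  obtain ⟨s₂, hs₂⟩ := hι.2 (b (a₂ x₀))
  have hrel0 : a₂ (b (a₁ x₀)) = a₁ (b (a₂ x₀)) := by
    have := LinearMap.ext_iff.1 h x₀
    simpa using this
  have hs₁' : b (a₁ x₀) = s₁ • x₀ := by rw [← hs₁, hsmul]
  have hs₂' : b (a₂ x₀) = s₂ • x₀ := by rw [← hs₂, hsmul]
  have heq : s₁ • a₂ x₀ = s₂ • a₁ x₀ := by
    have e1 : a₂ (b (a₁ x₀)) = s₁ • a₂ x₀ := by rw [hs₁', map_smul]
    have e2 : a₁ (b (a₂ x₀)) = s₂ • a₁ x₀ := by rw [hs₂', map_smul]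
    rw [← e1, ← e2]
    exact hrel0
  obtain ⟨h1, h2⟩ := key s₁ s₂ heq
  have hba₁ : b (a₁ x₀) = 0 := by rw [hs₁', h1, zero_smul]
  have hba₂ : b (a₂ x₀) = 0 := by rw [hs₂', h2, zero_smul]
  ext y
  obtain ⟨⟨u, v⟩, huv⟩ := hbij.2 y
  obtain ⟨s, hs⟩ := hι.2 u
  obtain ⟨t, ht⟩ := hι.2 v
  have hy : y = a₁ (s • x₀) + a₂ (t • x₀) := by
    rw [← hsmul, ← hsmul, hs, ht, ← huv]
    rfl
  simp [hy, map_smul, hba₁, hba₂]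

/-- Classification in chamber IV: if `θ₀ > 0`, `θ₁ < 0`, `θ₀ + 2θ₁ < 0`,
`ι : ℂ → V₀` is an isomorphism and `dim V₁ ≠ 1`, then the framed representation is
`Θ`-stable iff `dim V₁ = 2` and `(a₁, a₂) : V₀ ⊕ V₀ → V₁` is bijective; moreover, in
this case the relations of `(Q, I)` force `b₁ = b₂ = 0`. -/
theorem classification_chamber_IV
    [FiniteDimensional ℂ V₀] [FiniteDimensional ℂ V₁]
    (θ₀ θ₁ : ℝ) (hθ₀ : 0 < θ₀) (hθ₁ : θ₁ < 0) (hc : θ₀ + 2 * θ₁ < 0)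
    (a₁ a₂ : V₀ →ₗ[ℂ] V₁) (b₁ b₂ : V₁ →ₗ[ℂ] V₀)
    (c : V₀ →ₗ[ℂ] V₀) (d : V₁ →ₗ[ℂ] V₁) (ι : ℂ →ₗ[ℂ] V₀)
    (hrel : SatisfiesRelations a₁ a₂ b₁ b₂ c d)
    (hι : Function.Bijective ι)
    (hd1 : finrank ℂ V₁ ≠ 1) :
    (IsFramedStable θ₀ θ₁ a₁ a₂ b₁ b₂ c d ι ↔
      (finrank ℂ V₁ = 2 ∧ Function.Bijective ⇑(LinearMap.coprod a₁ a₂))) ∧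
    (IsFramedStable θ₀ θ₁ a₁ a₂ b₁ b₂ c d ι → b₁ = 0 ∧ b₂ = 0) := by
  have hV0 : finrank ℂ V₀ = 1 := by
    rw [← (LinearEquiv.ofBijective ι hι).finrank_eq]
    exact finrank_self ℂ
  have hx₀ : ι 1 ≠ 0 := fun h0 => one_ne_zero (hι.1 (by simpa using h0))
  have htopne : ((⊤ : Submodule ℂ V₀) = ⊥) → False := fun h =>
    hx₀ ((Submodule.mem_bot ℂ).1 (h ▸ Submodule.mem_top))
  have hmain : IsFramedStable θ₀ θ₁ a₁ a₂ b₁ b₂ c d ι ↔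
      (finrank ℂ V₁ = 2 ∧ Function.Bijective ⇑(LinearMap.coprod a₁ a₂)) := by
    constructor
    · intro hst
      set A := LinearMap.range a₁ ⊔ LinearMap.range a₂ with hAdef
      have hsub : IsSubrep a₁ a₂ b₁ b₂ c d ⊤ A := by
        refine ⟨fun x _ => ?_, fun x _ => ?_, fun _ _ => trivial, fun _ _ => trivial,
          fun _ _ => trivial, fun y hy => ?_⟩
        · exact Submodule.mem_sup_left (LinearMap.mem_range_self a₁ x)
        · exact Submodule.mem_sup_right (LinearMap.mem_range_self a₂ x)
        · obtain ⟨y₁, hy₁, y₂, hy₂, rfl⟩ := Submodule.mem_sup.1 hy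
          obtain ⟨x₁, rfl⟩ := hy₁
          obtain ⟨x₂, rfl⟩ := hy₂
          rw [map_add]
          refine add_mem (Submodule.mem_sup_left ?_) (Submodule.mem_sup_right ?_)
          · exact ⟨c x₁, by have := LinearMap.ext_iff.1 hrel.2.2.2.2.1 x₁; simpa using this.symm⟩
          · exact ⟨c x₂, by have := LinearMap.ext_iff.1 hrel.2.2.2.2.2.1 x₂; simpa using this.symm⟩
      have hAtop : A = ⊤ := by
        by_contra hA
        have hineq := hst.2 ⊤ A hsub le_top (fun h => hA h.2)
        rw [finrank_top] at hineq
        have hle : finrank ℂ A ≤ finrank ℂ V₁ := Submodule.finrank_le A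
        have hleR : (finrank ℂ A : ℝ) ≤ (finrank ℂ V₁ : ℝ) := by exact_mod_cast hle
        nlinarith
      have hsurj : Function.Surjective ⇑(LinearMap.coprod a₁ a₂) := by
        rw [← LinearMap.range_eq_top, LinearMap.range_coprod, ← hAdef, hAtop]
      have hle2 : finrank ℂ V₁ ≤ 2 := by
        have h1 := (LinearMap.coprod a₁ a₂).finrank_range_le
        rw [LinearMap.range_eq_top.2 hsurj, finrank_top] at h1
        simpa [hV0] using h1
      have hne0 : finrank ℂ V₁ ≠ 0 := by
        intro h0
        have hineq := hst.1 ⊤ ⊤ ⟨fun _ _ => trivial, fun _ _ => trivial, fun _ _ => trivial,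
          fun _ _ => trivial, fun _ _ => trivial, fun _ _ => trivial⟩ (fun h => htopne h.1)
        rw [finrank_top, finrank_top, hV0, h0] at hineq
        norm_num at hineq
        linarith
      have hn2 : finrank ℂ V₁ = 2 := by omega
      refine ⟨hn2, ?_, hsurj⟩
      have hfr : finrank ℂ (V₀ × V₀) = finrank ℂ V₁ := by
        simp [Module.finrank_prod, hV0, hn2]
      exact (LinearMap.injective_iff_surjective_of_finrank_eq_finrank hfr).2 hsurj
    · rintro ⟨hn2, hbij⟩
      have hW₀top : ∀ W₀ : Submodule ℂ V₀, W₀ ≠ ⊥ → W₀ = ⊤ := by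
        intro W₀ hW
        apply Submodule.eq_top_of_finrank_eq
        have h1 : finrank ℂ W₀ ≠ 0 := by
          intro h0
          exact hW (Submodule.finrank_eq_zero.1 h0)
        have h2 : finrank ℂ W₀ ≤ finrank ℂ V₀ := Submodule.finrank_le W₀
        omega
      have hW₁top : ∀ (W₀ : Submodule ℂ V₀) (W₁ : Submodule ℂ V₁),
          IsSubrep a₁ a₂ b₁ b₂ c d W₀ W₁ → W₀ = ⊤ → W₁ = ⊤ := by
        intro W₀ W₁ hsub hW₀
        rw [Submodule.eq_top_iff']
        intro y
        obtain ⟨⟨u, v⟩, huv⟩ := hbij.2 y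
        have hy : y = a₁ u + a₂ v := by rw [← huv]; rfl
        rw [hy]
        exact add_mem (hsub.1 u (by rw [hW₀]; trivial)) (hsub.2.1 v (by rw [hW₀]; trivial))
      constructor
      · intro W₀ W₁ hsub hne
        by_cases hW : W₀ = ⊥
        · have hW₁ : W₁ ≠ ⊥ := fun h => hne ⟨hW, h⟩
          have h1 : finrank ℂ W₁ ≠ 0 := fun h0 => hW₁ (Submodule.finrank_eq_zero.1 h0)
          have h1R : (1 : ℝ) ≤ (finrank ℂ W₁ : ℝ) := by exact_mod_cast Nat.one_le_iff_ne_zero.2 h1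
          rw [hW, finrank_bot]
          push_cast
          nlinarith
        · have hW₀t := hW₀top W₀ hW
          have hW₁t := hW₁top W₀ W₁ hsub hW₀t
          rw [hW₀t, hW₁t, finrank_top, finrank_top, hV0, hn2]
          push_cast
          linarith
      · intro W₀ W₁ hsub hrange hne
        have hr : (⊤ : Submodule ℂ V₀) ≤ W₀ := by
          rwa [LinearMap.range_eq_top.2 hι.2] at hrange
        have hW₀t : W₀ = ⊤ := top_le_iff.1 hr
        exact absurd ⟨hW₀t, hW₁top W₀ W₁ hsub hW₀t⟩ hne
  refine ⟨hmain, fun hst => ?_⟩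
  obtain ⟨hn2, hbij⟩ := hmain.1 hst
  exact ⟨b_eq_zero_aux a₁ a₂ b₁ ι hι hbij hrel.1,
    b_eq_zero_aux a₁ a₂ b₂ ι hι hbij hrel.2.1⟩
end

section
/- (Nonexistence in chamber V.) Suppose θ_0 > 0, θ_1 < 0 and θ_0 + 2θ_1 > 0. Then there is no Θ-stable framed representation Ṽ = (V_0, V_1, ℂ) of (Q̃,I) such that ι : ℂ → V_0 is an isomorphism and dim V_1 ≠ 1. -/
open Module

variable {V₀ V₁ : Type*} [AddCommGroup V₀] [Module ℂ V₀] [AddCommGroup V₁] [Module ℂ V₁]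

/-- Nonexistence in chamber V: if `θ₀ > 0`, `θ₁ < 0`, `θ₀ + 2θ₁ > 0`,
there is no `Θ`-stable framed representation `(V₀, V₁, ℂ)` of `(Q̃, I)` with
`ι : ℂ → V₀` an isomorphism and `dim V₁ ≠ 1`. -/
theorem nonexistence_chamber_V
    [FiniteDimensional ℂ V₀] [FiniteDimensional ℂ V₁]
    (θ₀ θ₁ : ℝ) (hθ₀ : 0 < θ₀) (hθ₁ : θ₁ < 0) (hc : 0 < θ₀ + 2 * θ₁)
    (a₁ a₂ : V₀ →ₗ[ℂ] V₁) (b₁ b₂ : V₁ →ₗ[ℂ] V₀)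
    (c : V₀ →ₗ[ℂ] V₀) (d : V₁ →ₗ[ℂ] V₁) (ι : ℂ →ₗ[ℂ] V₀)
    (hrel : SatisfiesRelations a₁ a₂ b₁ b₂ c d)
    (hι : Function.Bijective ι)
    (hd1 : finrank ℂ V₁ ≠ 1) :
    ¬ IsFramedStable θ₀ θ₁ a₁ a₂ b₁ b₂ c d ι := by
  intro hS
  obtain ⟨h1, h2⟩ := hS
  have hV0 : finrank ℂ V₀ = 1 := by
    rw [← (LinearEquiv.ofBijective ι hι).finrank_eq, finrank_self]
  set n := finrank ℂ V₁ with hn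
  set W₁ : Submodule ℂ V₁ := LinearMap.range a₁ ⊔ LinearMap.range a₂ with hW
  have hsub : IsSubrep a₁ a₂ b₁ b₂ c d ⊤ W₁ := by
    refine ⟨fun x _ => Submodule.mem_sup_left (LinearMap.mem_range_self a₁ x),
      fun x _ => Submodule.mem_sup_right (LinearMap.mem_range_self a₂ x),
      fun _ _ => trivial, fun _ _ => trivial, fun _ _ => trivial, fun y hy => ?_⟩
    rcases Submodule.mem_sup.mp hy with ⟨u, hu, v, hv, rfl⟩
    rcases hu with ⟨x, rfl⟩
    rcases hv with ⟨z, rfl⟩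
    rw [map_add]
    refine Submodule.add_mem _ (Submodule.mem_sup_left ⟨c x, ?_⟩)
      (Submodule.mem_sup_right ⟨c z, ?_⟩)
    · simpa using (LinearMap.congr_fun hrel.2.2.2.2.1 x).symm
    · simpa using (LinearMap.congr_fun hrel.2.2.2.2.2.1 z).symm
  have hWtop : W₁ = ⊤ := by
    by_contra hne
    have hlt := h2 ⊤ W₁ hsub le_top (fun h => hne h.2)
    rw [finrank_top, hV0] at hlt
    have hle : (finrank ℂ W₁ : ℝ) ≤ (n : ℝ) := by
      exact_mod_cast Submodule.finrank_le W₁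
    nlinarith
  have h2le : n ≤ 2 := by
    have hs := Submodule.finrank_add_le_finrank_add_finrank
      (LinearMap.range a₁) (LinearMap.range a₂)
    have hr1 : finrank ℂ (LinearMap.range a₁) ≤ 1 := hV0 ▸ LinearMap.finrank_range_le a₁
    have hr2 : finrank ℂ (LinearMap.range a₂) ≤ 1 := hV0 ▸ LinearMap.finrank_range_le a₂
    rw [← hW] at hs
    have : finrank ℂ W₁ = n := by rw [hWtop, finrank_top]
    omega
  have hsubT : IsSubrep a₁ a₂ b₁ b₂ c d ⊤ (⊤ : Submodule ℂ V₁) :=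
    ⟨fun _ _ => trivial, fun _ _ => trivial, fun _ _ => trivial,
      fun _ _ => trivial, fun _ _ => trivial, fun _ _ => trivial⟩
  have hbot : ¬((⊤ : Submodule ℂ V₀) = ⊥ ∧ (⊤ : Submodule ℂ V₁) = ⊥) := by
    rintro ⟨h, -⟩
    have : finrank ℂ (⊤ : Submodule ℂ V₀) = 0 := by rw [h, finrank_bot]
    rw [finrank_top, hV0] at this
    exact one_ne_zero this
  have hneg := h1 ⊤ ⊤ hsubT hbot
  rw [finrank_top, finrank_top, hV0] at hneg
  rw [← hn] at hneg
  have hcast : (n : ℝ) ≤ 2 := by exact_mod_cast h2le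
  push_cast at hneg
  nlinarith
end
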